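/- arXiv:2603.14955 — 4 statements merged into one kernel-verified Lean document; each statement's English description precedes it below -/
import Mathlib

section
/- Let ⟨[0,1], ⊕_p⟩ be a convex algebra satisfying (MO), (UC) and (LC). Then for all x, y ∈ [0,1] with x < y such that the half-open interval (x, y] contains no element of E^⊕, the map Γ_{x,y} : [0,1] → [x,y] defined by Γ_{x,y}(t) = y ⊕_t x is a strictly increasing bijection onto [x,y]. -/
open Set Filter Topology

/-- A convex algebra on the interval `[0,1] ⊆ ℝ`: `op p x y` denotes `x ⊕_p y`,
for `p ∈ (0,1)`, extended to `p ∈ [0,1]` by the projection axioms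
`x ⊕_1 y = x` and `x ⊕_0 y = y`.  All axioms are required only on `[0,1]`;
values of `op` outside `[0,1]` are irrelevant. -/
structure UCA where
  op : ℝ → ℝ → ℝ → ℝ
  mem : ∀ p ∈ Set.Icc (0:ℝ) 1, ∀ x ∈ Set.Icc (0:ℝ) 1, ∀ y ∈ Set.Icc (0:ℝ) 1,
      op p x y ∈ Set.Icc (0:ℝ) 1
  idem : ∀ p ∈ Set.Ioo (0:ℝ) 1, ∀ x ∈ Set.Icc (0:ℝ) 1, op p x x = x
  comm : ∀ p ∈ Set.Ioo (0:ℝ) 1, ∀ x ∈ Set.Icc (0:ℝ) 1, ∀ y ∈ Set.Icc (0:ℝ) 1,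
      op p x y = op (1 - p) y x
  assoc : ∀ p ∈ Set.Ioo (0:ℝ) 1, ∀ q ∈ Set.Ioo (0:ℝ) 1,
      ∀ x ∈ Set.Icc (0:ℝ) 1, ∀ y ∈ Set.Icc (0:ℝ) 1, ∀ z ∈ Set.Icc (0:ℝ) 1,
      op q (op p x y) z = op (p * q) x (op ((1 - p) * q / (1 - p * q)) y z)
  proj1 : ∀ x ∈ Set.Icc (0:ℝ) 1, ∀ y ∈ Set.Icc (0:ℝ) 1, op 1 x y = x
  proj0 : ∀ x ∈ Set.Icc (0:ℝ) 1, ∀ y ∈ Set.Icc (0:ℝ) 1, op 0 x y = y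

/-- Monotonicity (MO): `x ≤ x'` implies `x ⊕_p y ≤ x' ⊕_p y`. -/
def UCA.MO (A : UCA) : Prop :=
  ∀ x ∈ Set.Icc (0:ℝ) 1, ∀ x' ∈ Set.Icc (0:ℝ) 1, ∀ y ∈ Set.Icc (0:ℝ) 1,
    ∀ p ∈ Set.Ioo (0:ℝ) 1, x ≤ x' → A.op p x y ≤ A.op p x' y

/-- (UC): for `x, y ∈ [0,1)` and `p ∈ (0,1)`,
`limsup_{ε→0⁺} ((x+ε) ⊕_p (y+ε)) ≤ x ⊕_p y`. -/
def UCA.UC (A : UCA) : Prop :=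
  ∀ x ∈ Set.Ico (0:ℝ) 1, ∀ y ∈ Set.Ico (0:ℝ) 1, ∀ p ∈ Set.Ioo (0:ℝ) 1,
    Filter.limsup (fun ε => A.op p (x + ε) (y + ε)) (𝓝[>] (0:ℝ)) ≤ A.op p x y

/-- (LC): for `x ≤ y` in `[0,1]`, `liminf_{p→1⁻} (y ⊕_p x) ≥ y`. -/
def UCA.LC (A : UCA) : Prop :=
  ∀ x ∈ Set.Icc (0:ℝ) 1, ∀ y ∈ Set.Icc (0:ℝ) 1, x ≤ y →
    y ≤ Filter.liminf (fun p => A.op p y x) (𝓝[<] (1:ℝ))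

/-- `y ⊳ x` : `y` eats `x`, i.e. `y ⊕_t x = y` for all `t ∈ (0,1]`. -/
def UCA.Eats (A : UCA) (y x : ℝ) : Prop :=
  ∀ t ∈ Set.Ioc (0:ℝ) 1, A.op t y x = y

/-- `E^⊕ = { y ∈ [0,1] : y ⊳ 0 }`. -/
def UCA.E (A : UCA) : Set ℝ := {y ∈ Set.Icc (0:ℝ) 1 | A.Eats y 0}

/-- `V_{x,y} = inf { y ⊕_p x : p ∈ (0,1] }`. -/
noncomputable def UCA.V (A : UCA) (x y : ℝ) : ℝ :=
  sInf ((fun p => A.op p y x) '' Set.Ioc (0:ℝ) 1)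

namespace UCAProof

lemma IooIcc : Set.Ioo (0:ℝ) 1 ⊆ Set.Icc (0:ℝ) 1 := Set.Ioo_subset_Icc_self

variable (A : UCA)

/-- Monotonicity in the second argument. -/
lemma mono2 (hMO : A.MO) {p a b b' : ℝ} (hp : p ∈ Set.Ioo (0:ℝ) 1)
    (ha : a ∈ Set.Icc (0:ℝ) 1) (hb : b ∈ Set.Icc (0:ℝ) 1) (hb' : b' ∈ Set.Icc (0:ℝ) 1)
    (h : b ≤ b') : A.op p a b ≤ A.op p a b' := by
  have hp' : (1-p) ∈ Set.Ioo (0:ℝ) 1 := ⟨by linarith [hp.2], by linarith [hp.1]⟩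
  rw [A.comm p hp a ha b hb, A.comm p hp a ha b' hb']
  exact hMO b hb b' hb' a ha (1-p) hp' h

lemma le_op (hMO : A.MO) {p a b : ℝ} (hp : p ∈ Set.Ioo (0:ℝ) 1)
    (ha : a ∈ Set.Icc (0:ℝ) 1) (hb : b ∈ Set.Icc (0:ℝ) 1) (hba : b ≤ a) :
    b ≤ A.op p a b := by
  have h := hMO b hb a ha b hb p hp hba
  rwa [A.idem p hp b hb] at h

lemma op_le (hMO : A.MO) {p a b : ℝ} (hp : p ∈ Set.Ioo (0:ℝ) 1)
    (ha : a ∈ Set.Icc (0:ℝ) 1) (hb : b ∈ Set.Icc (0:ℝ) 1) (hba : b ≤ a) :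
    A.op p a b ≤ a := by
  have hp' : (1-p) ∈ Set.Ioo (0:ℝ) 1 := ⟨by linarith [hp.2], by linarith [hp.1]⟩
  rw [A.comm p hp a ha b hb]
  have h := hMO b hb a ha a ha (1-p) hp' hba
  rwa [A.idem _ hp' a ha] at h

/-- `(a ⊕_p b) ⊕_q b = a ⊕_{pq} b`. -/
lemma collapse {p q a b : ℝ} (hp : p ∈ Set.Ioo (0:ℝ) 1) (hq : q ∈ Set.Ioo (0:ℝ) 1)
    (ha : a ∈ Set.Icc (0:ℝ) 1) (hb : b ∈ Set.Icc (0:ℝ) 1) :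
    A.op q (A.op p a b) b = A.op (p*q) a b := by
  have hpq : p*q < 1 := by nlinarith [hp.1, hp.2, hq.1, hq.2]
  have hc : (1-p)*q/(1-p*q) ∈ Set.Ioo (0:ℝ) 1 := by
    constructor
    · exact div_pos (mul_pos (by linarith [hp.2]) hq.1) (by linarith)
    · rw [div_lt_one (by linarith)]
      nlinarith [hp.1, hq.2]
  have h := A.assoc p hp q hq a ha b hb b hb
  rwa [A.idem _ hc b hb] at h

/-- monotone in the parameter when the second argument is below the first. -/
lemma param_mono (hMO : A.MO) {a b t₁ t₂ : ℝ}
    (ha : a ∈ Set.Icc (0:ℝ) 1) (hb : b ∈ Set.Icc (0:ℝ) 1) (hba : b ≤ a)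
    (ht₁ : t₁ ∈ Set.Ioo (0:ℝ) 1) (ht₂ : t₂ ∈ Set.Ioo (0:ℝ) 1) (h : t₁ ≤ t₂) :
    A.op t₁ a b ≤ A.op t₂ a b := by
  rcases eq_or_lt_of_le h with rfl | hlt
  · exact le_refl _
  · have hr : t₁ / t₂ ∈ Set.Ioo (0:ℝ) 1 := ⟨div_pos ht₁.1 ht₂.1, (div_lt_one ht₂.1).2 hlt⟩
    have hkey : A.op (t₁/t₂) (A.op t₂ a b) b = A.op t₁ a b := by
      rw [collapse A ht₂ hr ha hb]
      congr 1
      field_simp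
      exact mul_div_cancel_left₀ t₁ (ne_of_gt ht₂.1)
    have hmem : A.op t₂ a b ∈ Set.Icc (0:ℝ) 1 := A.mem t₂ (UCAProof.IooIcc ht₂) a ha b hb
    have hb2 : b ≤ A.op t₂ a b := le_op A hMO ht₂ ha hb hba
    calc A.op t₁ a b = A.op (t₁/t₂) (A.op t₂ a b) b := hkey.symm
      _ ≤ A.op t₂ a b := op_le A hMO hr hmem hb hb2

/-- One eating parameter suffices. -/
lemma eats_of_single (hMO : A.MO) {a b r : ℝ}
    (ha : a ∈ Set.Icc (0:ℝ) 1) (hb : b ∈ Set.Icc (0:ℝ) 1) (hba : b ≤ a)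
    (hr : r ∈ Set.Ioo (0:ℝ) 1) (h : A.op r a b = a) : A.Eats a b := by
  have hpow : ∀ n : ℕ, A.op (r^(n+1)) a b = a := by
    intro n
    induction n with
    | zero => simpa using h
    | succ n ih =>
      have hrn : r^(n+1) ∈ Set.Ioo (0:ℝ) 1 :=
        ⟨pow_pos hr.1 _, pow_lt_one₀ hr.1.le hr.2 (Nat.succ_ne_zero n)⟩
      have h2 := collapse A hrn hr ha hb
      rw [ih, h] at h2
      rw [pow_succ]
      exact h2.symm
  intro t ht
  rcases eq_or_lt_of_le ht.2 with rfl | hlt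
  · exact A.proj1 a ha b hb
  · have htI : t ∈ Set.Ioo (0:ℝ) 1 := ⟨ht.1, hlt⟩
    obtain ⟨n, hn⟩ := exists_pow_lt_of_lt_one ht.1 hr.2
    have hrn1 : r^(n+1) ∈ Set.Ioo (0:ℝ) 1 :=
      ⟨pow_pos hr.1 _, pow_lt_one₀ hr.1.le hr.2 (Nat.succ_ne_zero n)⟩
    have hle : r^(n+1) ≤ t :=
      le_of_lt (lt_of_le_of_lt (pow_le_pow_of_le_one hr.1.le hr.2.le (Nat.le_succ n)) hn)
    have h3 := param_mono A hMO ha hb hba hrn1 htI hle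
    rw [hpow n] at h3
    exact le_antisymm (op_le A hMO htI ha hb hba) h3

/-- Eating is upward closed in the eaten element. -/
lemma eats_up (hMO : A.MO) {a b c : ℝ}
    (ha : a ∈ Set.Icc (0:ℝ) 1) (hb : b ∈ Set.Icc (0:ℝ) 1) (hc : c ∈ Set.Icc (0:ℝ) 1)
    (h : A.Eats a b) (hbc : b ≤ c) (hca : c ≤ a) : A.Eats a c := by
  intro t ht
  rcases eq_or_lt_of_le ht.2 with rfl | hlt
  · exact A.proj1 a ha c hc
  · have htI : t ∈ Set.Ioo (0:ℝ) 1 := ⟨ht.1, hlt⟩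
    have h1 := mono2 A hMO htI ha hb hc hbc
    rw [h t ht] at h1
    exact le_antisymm (op_le A hMO htI ha hc hca) h1

/-- Eating is transitive. -/
lemma eats_trans {a b c : ℝ}
    (ha : a ∈ Set.Icc (0:ℝ) 1) (hb : b ∈ Set.Icc (0:ℝ) 1) (hc : c ∈ Set.Icc (0:ℝ) 1)
    (hab : A.Eats a b) (hbc : A.Eats b c) : A.Eats a c := by
  intro t ht
  rcases eq_or_lt_of_le ht.2 with rfl | hlt
  · exact A.proj1 a ha c hc
  · have htI : t ∈ Set.Ioo (0:ℝ) 1 := ⟨ht.1, hlt⟩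
    have hhalf : (1/2 : ℝ) ∈ Set.Ioo (0:ℝ) 1 := ⟨by norm_num, by norm_num⟩
    have hc' : (1-(1/2:ℝ))*t/(1-(1/2)*t) ∈ Set.Ioo (0:ℝ) 1 := by
      constructor
      · apply div_pos
        · nlinarith [htI.1]
        · nlinarith [htI.2]
      · rw [div_lt_one (by nlinarith [htI.2])]
        nlinarith [htI.2]
    have h := A.assoc (1/2) hhalf t htI a ha b hb c hc
    rw [hab (1/2) ⟨by norm_num, by norm_num⟩, hbc _ ⟨hc'.1, hc'.2.le⟩] at h
    rw [h]
    exact hab ((1/2)*t) ⟨by nlinarith [htI.1], by nlinarith [htI.2]⟩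

/-- tail identity: if `a ⊕_p β = a` for all `p ∈ (0,1)` then
`a ⊕_s (β ⊕_r w) = a ⊕_{s+r(1-s)} w`. -/
lemma tail_id {a β w s r : ℝ}
    (ha : a ∈ Set.Icc (0:ℝ) 1) (hβ : β ∈ Set.Icc (0:ℝ) 1) (hw : w ∈ Set.Icc (0:ℝ) 1)
    (hs : s ∈ Set.Ioo (0:ℝ) 1) (hr : r ∈ Set.Ioo (0:ℝ) 1)
    (hab : ∀ p ∈ Set.Ioo (0:ℝ) 1, A.op p a β = a) :
    A.op s a (A.op r β w) = A.op (s + r*(1-s)) a w := by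
  have hq' : s + r*(1-s) ∈ Set.Ioo (0:ℝ) 1 :=
    ⟨by nlinarith [hs.1, hr.1, hs.2], by nlinarith [hs.2, hr.2]⟩
  have hp' : s/(s + r*(1-s)) ∈ Set.Ioo (0:ℝ) 1 :=
    ⟨div_pos hs.1 hq'.1, (div_lt_one hq'.1).2 (by nlinarith [hr.1, hs.2])⟩
  have h := A.assoc (s/(s + r*(1-s))) hp' (s + r*(1-s)) hq' a ha β hβ w hw
  have h1 : s/(s + r*(1-s)) * (s + r*(1-s)) = s := div_mul_cancel₀ s (ne_of_gt hq'.1)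
  have h3 : (1 - s/(s + r*(1-s))) * (s + r*(1-s)) / (1 - s) = r := by
    rw [sub_mul, one_mul, div_mul_cancel₀ s (ne_of_gt hq'.1),
      show s + r*(1-s) - s = r*(1-s) by ring,
      mul_div_assoc, div_self (ne_of_gt (by linarith [hs.2] : (0:ℝ) < 1-s)), mul_one]
  rw [hab _ hp', h1, h3] at h
  exact h.symm

/-- the V-lemma: the infimum of the curve `s ↦ a ⊕_s w` eats `w` (using (UC)). -/
lemma V_eats (hMO : A.MO) (hUC : A.UC) {a w : ℝ}
    (ha : a ∈ Set.Icc (0:ℝ) 1) (hw : w ∈ Set.Icc (0:ℝ) 1) (hwa : w ≤ a)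
    (V : ℝ) (hVdef : V = sInf ((fun s => A.op s a w) '' Set.Ioo (0:ℝ) 1)) (hV1 : V < 1) :
    w ≤ V ∧ V ≤ a ∧ A.Eats V w := by
  have h12 : (1/2 : ℝ) ∈ Set.Ioo (0:ℝ) 1 := ⟨by norm_num, by norm_num⟩
  have hne : ((fun s => A.op s a w) '' Set.Ioo (0:ℝ) 1).Nonempty :=
    ⟨_, Set.mem_image_of_mem _ h12⟩
  have hlb : ∀ v ∈ (fun s => A.op s a w) '' Set.Ioo (0:ℝ) 1, w ≤ v := by
    rintro v ⟨s, hs, rfl⟩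
    exact le_op A hMO hs ha hw hwa
  have hbdd : BddBelow ((fun s => A.op s a w) '' Set.Ioo (0:ℝ) 1) := ⟨w, hlb⟩
  have hwV : w ≤ V := by rw [hVdef]; exact le_csInf hne hlb
  have hVa : V ≤ a := by
    have h1 : V ≤ A.op (1/2) a w := by
      rw [hVdef]; exact csInf_le hbdd (Set.mem_image_of_mem _ h12)
    exact h1.trans (op_le A hMO h12 ha hw hwa)
  have hVI : V ∈ Set.Icc (0:ℝ) 1 := ⟨le_trans hw.1 hwV, hVa.trans ha.2⟩
  refine ⟨hwV, hVa, ?_⟩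
  intro t ht
  rcases eq_or_lt_of_le ht.2 with rfl | hlt
  · exact A.proj1 V hVI w hw
  have htI : t ∈ Set.Ioo (0:ℝ) 1 := ⟨ht.1, hlt⟩
  have hupper : A.op t V w ≤ V := by
    have h1 := mono2 A hMO htI hVI hw hVI hwV
    rwa [A.idem t htI V hVI] at h1
  have hw1 : w < 1 := lt_of_le_of_lt hwV hV1
  have hsmall : Set.Ioo (0:ℝ) (1-V) ∈ 𝓝[>] (0:ℝ) :=
    Ioo_mem_nhdsGT_of_mem ⟨le_refl 0, by linarith⟩
  have hlower : V ≤ A.op t V w := by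
    have huc := hUC V ⟨hVI.1, hV1⟩ w ⟨hw.1, hw1⟩ t htI
    refine le_trans (le_limsup_of_frequently_le ?_ ?_) huc
    · apply Filter.Eventually.frequently
      filter_upwards [hsmall] with ε hε
      obtain ⟨v, hvmem, hv⟩ := exists_lt_of_csInf_lt hne
        (show sInf ((fun s => A.op s a w) '' Set.Ioo (0:ℝ) 1) < V + ε by
          rw [← hVdef]; linarith [hε.1])
      obtain ⟨s, hs, rfl⟩ := hvmem
      have hst : s*t ∈ Set.Ioo (0:ℝ) 1 :=
        ⟨mul_pos hs.1 htI.1, by nlinarith [hs.2, htI.2, hs.1, htI.1]⟩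
      have hVle : V ≤ A.op (s*t) a w := by
        rw [hVdef]; exact csInf_le hbdd (Set.mem_image_of_mem _ hst)
      have hcoll : A.op t (A.op s a w) w = A.op (s*t) a w := collapse A hs htI ha hw
      have hsaw : A.op s a w ∈ Set.Icc (0:ℝ) 1 := A.mem s (UCAProof.IooIcc hs) a ha w hw
      have hwε : w + ε ∈ Set.Icc (0:ℝ) 1 :=
        ⟨by linarith [hw.1, hε.1], by linarith [hwV, hε.2]⟩
      have hVε : V + ε ∈ Set.Icc (0:ℝ) 1 :=
        ⟨by linarith [hVI.1, hε.1], by linarith [hε.2]⟩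
      have hm1 : A.op t (A.op s a w) w ≤ A.op t (A.op s a w) (w+ε) :=
        mono2 A hMO htI hsaw hw hwε (by linarith [hε.1])
      have hm2 : A.op t (A.op s a w) (w+ε) ≤ A.op t (V+ε) (w+ε) :=
        hMO _ hsaw (V+ε) hVε (w+ε) hwε t htI hv.le
      calc V ≤ A.op (s*t) a w := hVle
        _ = A.op t (A.op s a w) w := hcoll.symm
        _ ≤ A.op t (A.op s a w) (w+ε) := hm1
        _ ≤ A.op t (V+ε) (w+ε) := hm2
    · refine ⟨1, ?_⟩
      rw [Filter.eventually_map]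
      filter_upwards [hsmall] with ε hε
      exact (A.mem t (UCAProof.IooIcc htI) (V+ε) ⟨by linarith [hVI.1, hε.1], by linarith [hε.2]⟩
        (w+ε) ⟨by linarith [hw.1, hε.1], by linarith [hwV, hε.2]⟩).2
  exact le_antisymm hupper hlower

/-- from (LC): the tail of the curve `q ↦ a ⊕_q w` is eventually above any `m < a`. -/
lemma tail_big (hLC : A.LC) {a w m : ℝ}
    (ha : a ∈ Set.Icc (0:ℝ) 1) (hw : w ∈ Set.Icc (0:ℝ) 1) (hwa : w ≤ a) (hm : m < a) :
    ∃ r ∈ Set.Ioo (0:ℝ) 1, ∀ q ∈ Set.Ioo r 1, m < A.op q a w := by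
  have hIoo : ∀ᶠ q in 𝓝[<](1:ℝ), q ∈ Set.Ioo (0:ℝ) 1 := by
    rw [Filter.eventually_iff]
    exact Ioo_mem_nhdsLT_of_mem ⟨zero_lt_one, le_refl 1⟩
  have hbdd : Filter.IsBoundedUnder (· ≥ ·) (𝓝[<](1:ℝ)) (fun q => A.op q a w) := by
    refine ⟨0, ?_⟩
    rw [Filter.eventually_map]
    filter_upwards [hIoo] with q hq
    exact (A.mem q (UCAProof.IooIcc hq) a ha w hw).1
  have hlc := hLC w hw a ha hwa
  have hev : ∀ᶠ q in 𝓝[<](1:ℝ), m < A.op q a w :=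
    eventually_lt_of_lt_liminf (lt_of_lt_of_le hm hlc) hbdd
  have hev2 : ∀ᶠ q in 𝓝[<](1:ℝ), m < A.op q a w ∧ q ∈ Set.Ioo (0:ℝ) 1 := hev.and hIoo
  rw [Filter.eventually_iff] at hev2
  obtain ⟨l, hl, hsub⟩ := mem_nhdsLT_iff_exists_Ioo_subset.1 hev2
  refine ⟨max l (1/2), ⟨lt_of_lt_of_le (by norm_num) (le_max_right _ _), max_lt hl (by norm_num)⟩,
    fun q hq => ?_⟩
  exact (hsub ⟨lt_of_le_of_lt (le_max_left _ _) hq.1, hq.2⟩).1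

/-- downward eating lemma: if `a < 1` eats `x'` then it eats every `w ≤ x'`. -/
lemma eats_down (hMO : A.MO) (hUC : A.UC) (hLC : A.LC) {a x' w : ℝ}
    (ha : a ∈ Set.Icc (0:ℝ) 1) (hx' : x' ∈ Set.Icc (0:ℝ) 1) (hw : w ∈ Set.Icc (0:ℝ) 1)
    (ha1 : a < 1) (hwx : w ≤ x') (hxa : x' < a) (h : A.Eats a x') : A.Eats a w := by
  classical
  set X := {u : ℝ | u ∈ Set.Icc w x' ∧ A.Eats a u} with hXdef
  have hx'X : x' ∈ X := ⟨⟨hwx, le_refl x'⟩, h⟩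
  have hXne : X.Nonempty := ⟨x', hx'X⟩
  have hXlb : ∀ u ∈ X, w ≤ u := fun u hu => hu.1.1
  have hbdd : BddBelow X := ⟨w, hXlb⟩
  set β := sInf X with hβdef
  have hwβ : w ≤ β := le_csInf hXne hXlb
  have hβx : β ≤ x' := csInf_le hbdd hx'X
  have hβI : β ∈ Set.Icc (0:ℝ) 1 := ⟨le_trans hw.1 hwβ, le_trans hβx hx'.2⟩
  have hβa : β ≤ a := le_trans hβx hxa.le
  have hsmall : Set.Ioo (0:ℝ) (1-a) ∈ 𝓝[>] (0:ℝ) :=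
    Ioo_mem_nhdsGT_of_mem ⟨le_refl 0, by linarith⟩
  have hEβ : A.Eats a β := by
    intro t ht
    rcases eq_or_lt_of_le ht.2 with rfl | hlt
    · exact A.proj1 a ha β hβI
    have htI : t ∈ Set.Ioo (0:ℝ) 1 := ⟨ht.1, hlt⟩
    have ht' : (1-t) ∈ Set.Ioo (0:ℝ) 1 := ⟨by linarith [htI.2], by linarith [htI.1]⟩
    have hupper : A.op t a β ≤ a := op_le A hMO htI ha hβI hβa
    have huc := hUC β ⟨hβI.1, lt_of_le_of_lt hβa ha1⟩ a ⟨ha.1, ha1⟩ (1-t) ht'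
    have hlower : a ≤ A.op (1-t) β a := by
      refine le_trans (le_limsup_of_frequently_le ?_ ?_) huc
      · apply Filter.Eventually.frequently
        filter_upwards [hsmall] with ε hε
        obtain ⟨u, huX, huβ⟩ := exists_lt_of_csInf_lt hXne
          (show sInf X < β + ε by rw [← hβdef]; linarith [hε.1])
        have huI : u ∈ Set.Icc (0:ℝ) 1 := ⟨le_trans hw.1 huX.1.1, le_trans huX.1.2 hx'.2⟩
        have hβε : β + ε ∈ Set.Icc (0:ℝ) 1 :=
          ⟨by linarith [hβI.1, hε.1], by linarith [hβa, hε.2]⟩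
        have haε : a + ε ∈ Set.Icc (0:ℝ) 1 := ⟨by linarith [ha.1, hε.1], by linarith [hε.2]⟩
        calc a = A.op t a u := (huX.2 t ht).symm
          _ = A.op (1-t) u a := A.comm t htI a ha u huI
          _ ≤ A.op (1-t) u (a+ε) := mono2 A hMO ht' huI ha haε (by linarith [hε.1])
          _ ≤ A.op (1-t) (β+ε) (a+ε) := hMO u huI (β+ε) hβε (a+ε) haε (1-t) ht' huβ.le
      · refine ⟨1, ?_⟩
        rw [Filter.eventually_map]
        filter_upwards [hsmall] with ε hε
        exact (A.mem (1-t) (UCAProof.IooIcc ht') (β+ε) ⟨by linarith [hβI.1, hε.1], by linarith [hβa, hε.2]⟩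
          (a+ε) ⟨by linarith [ha.1, hε.1], by linarith [hε.2]⟩).2
    rw [A.comm t htI a ha β hβI]
    exact le_antisymm (by rw [← A.comm t htI a ha β hβI]; exact hupper) hlower
  by_cases hcase : ∃ r ∈ Set.Ioo (0:ℝ) 1, A.op r β w = β
  · obtain ⟨r, hr, hrw⟩ := hcase
    have hEβw : A.Eats β w := eats_of_single A hMO hβI hw hwβ hr hrw
    exact eats_trans A ha hβI hw hEβ hEβw
  · push_neg at hcase
    exfalso
    have hwa : w ≤ a := le_trans hwx hxa.le
    have hm : (x' + a)/2 < a := by linarith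
    obtain ⟨r, hr, hgood⟩ := tail_big A hLC ha hw hwa hm
    set u := A.op r β w with hudef
    have huβ' : u ≤ β := op_le A hMO hr hβI hw hwβ
    have huβ : u < β := lt_of_le_of_ne huβ' (hcase r hr)
    have hwu : w ≤ u := le_op A hMO hr hβI hw hwβ
    have huI : u ∈ Set.Icc (0:ℝ) 1 := ⟨le_trans hw.1 hwu, le_trans huβ' hβI.2⟩
    have hua : u ≤ a := le_trans huβ' hβa
    have hId : ∀ s ∈ Set.Ioo (0:ℝ) 1, A.op s a u = A.op (s + r*(1-s)) a w := by
      intro s hs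
      exact tail_id A ha hβI hw hs hr (fun p hp => hEβ p ⟨hp.1, hp.2.le⟩)
    have himg : ∀ s ∈ Set.Ioo (0:ℝ) 1, (s + r*(1-s)) ∈ Set.Ioo r 1 := by
      intro s hs
      constructor
      · nlinarith [hr.1, hr.2, hs.1, hs.2]
      · nlinarith [hr.2, hs.2, hs.1]
    set G := sInf ((fun s => A.op s a u) '' Set.Ioo (0:ℝ) 1) with hGdef
    have h12 : (1/2 : ℝ) ∈ Set.Ioo (0:ℝ) 1 := ⟨by norm_num, by norm_num⟩
    have hGlb : ∀ v ∈ (fun s => A.op s a u) '' Set.Ioo (0:ℝ) 1, u ≤ v := by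
      rintro v ⟨s, hs, rfl⟩
      exact le_op A hMO hs ha huI hua
    have hGm : (x' + a)/2 ≤ G := by
      rw [hGdef]
      apply le_csInf ⟨_, Set.mem_image_of_mem _ h12⟩
      rintro v ⟨s, hs, rfl⟩
      show (x' + a)/2 ≤ A.op s a u
      rw [hId s hs]
      exact (hgood _ (himg s hs)).le
    have hG1 : G < 1 := by
      have hle : G ≤ A.op (1/2) a u := by
        rw [hGdef]; exact csInf_le ⟨u, hGlb⟩ (Set.mem_image_of_mem _ h12)
      exact lt_of_le_of_lt (hle.trans (op_le A hMO h12 ha huI hua)) ha1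
    obtain ⟨huG, hGa, hEGu⟩ := V_eats A hMO hUC ha huI hua G hGdef hG1
    have hGI : G ∈ Set.Icc (0:ℝ) 1 := ⟨le_trans huI.1 huG, le_trans hGa ha.2⟩
    have hxG : x' ≤ G := le_trans (by linarith : x' ≤ (x'+a)/2) hGm
    have hEaG : A.Eats a G := eats_up A hMO ha hx' hGI h hxG hGa
    have hEau : A.Eats a u := eats_trans A ha hGI huI hEaG hEGu
    have huX : u ∈ X := ⟨⟨hwu, le_trans huβ' hβx⟩, hEau⟩
    exact absurd (csInf_le hbdd huX) (not_le.2 huβ)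

/-- if `z ∈ (x,y]` eats `x` then there is an element of `E^⊕` in `(x,y]`: contradiction. -/
lemma kill (hMO : A.MO) (hUC : A.UC) (hLC : A.LC) {x y z : ℝ}
    (hx : x ∈ Set.Icc (0:ℝ) 1) (hy : y ∈ Set.Icc (0:ℝ) 1) (hxy : x < y)
    (hE : Set.Ioc x y ∩ A.E = ∅) (hzIoc : z ∈ Set.Ioc x y) (h : A.Eats z x) : False := by
  have hzI : z ∈ Set.Icc (0:ℝ) 1 := ⟨le_trans hx.1 hzIoc.1.le, le_trans hzIoc.2 hy.2⟩
  have hnotE : ∀ v, v ∈ Set.Ioc x y → v ∈ Set.Icc (0:ℝ) 1 → A.Eats v 0 → False := by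
    intro v hv hvI hveats
    have hmem : v ∈ Set.Ioc x y ∩ A.E := ⟨hv, hvI, hveats⟩
    rw [hE] at hmem
    exact hmem
  have h0 : (0:ℝ) ∈ Set.Icc (0:ℝ) 1 := ⟨le_refl 0, zero_le_one⟩
  have h0z : (0:ℝ) ≤ z := hzI.1
  by_cases h1 : ∃ s ∈ Set.Ioo (0:ℝ) 1, A.op s z 0 = z
  · obtain ⟨s, hs, hsz⟩ := h1
    exact hnotE z hzIoc hzI (eats_of_single A hMO hzI h0 h0z hs hsz)
  · push_neg at h1
    have hxz : x < z := hzIoc.1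
    have hm : (x + z)/2 < z := by linarith
    obtain ⟨r, hr, hgood⟩ := tail_big A hLC hzI h0 h0z hm
    set u := A.op r x 0 with hudef
    have hu_le : u ≤ x := op_le A hMO hr hx h0 hx.1
    have h0u : (0:ℝ) ≤ u := le_op A hMO hr hx h0 hx.1
    have huI : u ∈ Set.Icc (0:ℝ) 1 := ⟨h0u, le_trans hu_le hx.2⟩
    have huz : u ≤ z := le_trans hu_le hxz.le
    have hId : ∀ s ∈ Set.Ioo (0:ℝ) 1, A.op s z u = A.op (s + r*(1-s)) z 0 := by
      intro s hs
      exact tail_id A hzI hx h0 hs hr (fun p hp => h p ⟨hp.1, hp.2.le⟩)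
    have himg : ∀ s ∈ Set.Ioo (0:ℝ) 1, (s + r*(1-s)) ∈ Set.Ioo r 1 := by
      intro s hs
      constructor
      · nlinarith [hr.1, hr.2, hs.1, hs.2]
      · nlinarith [hr.2, hs.2, hs.1]
    set G := sInf ((fun s => A.op s z u) '' Set.Ioo (0:ℝ) 1) with hGdef
    have h12 : (1/2 : ℝ) ∈ Set.Ioo (0:ℝ) 1 := ⟨by norm_num, by norm_num⟩
    have hGlb : ∀ v ∈ (fun s => A.op s z u) '' Set.Ioo (0:ℝ) 1, u ≤ v := by
      rintro v ⟨s, hs, rfl⟩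
      exact le_op A hMO hs hzI huI huz
    have hGm : (x + z)/2 ≤ G := by
      rw [hGdef]
      apply le_csInf ⟨_, Set.mem_image_of_mem _ h12⟩
      rintro v ⟨s, hs, rfl⟩
      show (x + z)/2 ≤ A.op s z u
      rw [hId s hs]
      exact (hgood _ (himg s hs)).le
    have hG1 : G < 1 := by
      have hle : G ≤ A.op (1/2) z u := by
        rw [hGdef]; exact csInf_le ⟨u, hGlb⟩ (Set.mem_image_of_mem _ h12)
      have heq : A.op (1/2) z u = A.op (1/2 + r*(1-1/2)) z 0 := hId _ h12
      have hq0 : (1/2 + r*(1-1/2) : ℝ) ∈ Set.Ioo (0:ℝ) 1 :=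
        ⟨by nlinarith [hr.1], (himg _ h12).2⟩
      have hlez : A.op (1/2 + r*(1-1/2)) z 0 ≤ z := op_le A hMO hq0 hzI h0 h0z
      rcases lt_or_eq_of_le hlez with hlt | heq2
      · calc G ≤ A.op (1/2) z u := hle
          _ = A.op (1/2 + r*(1-1/2)) z 0 := heq
          _ < z := hlt
          _ ≤ 1 := hzI.2
      · exact absurd heq2 (h1 _ hq0)
    obtain ⟨huG, hGz, hEGu⟩ := V_eats A hMO hUC hzI huI huz G hGdef hG1
    have hGI : G ∈ Set.Icc (0:ℝ) 1 := ⟨le_trans huI.1 huG, le_trans hGz hzI.2⟩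
    have hxG : x < G := lt_of_lt_of_le (by linarith : x < (x+z)/2) hGm
    have huG' : u < G := lt_of_le_of_lt hu_le hxG
    have hEG0 : A.Eats G 0 := eats_down A hMO hUC hLC hGI huI h0 hG1 h0u huG' hEGu
    exact hnotE G ⟨hxG, le_trans hGz hzIoc.2⟩ hGI hEG0

end UCAProof

/-- Proposition 3.3(ii): for a convex algebra on `[0,1]` satisfying (MO), (UC), (LC),
for all `x < y` in `[0,1]` with `(x,y] ∩ E^⊕ = ∅`, the map `Γ_{x,y} : t ↦ y ⊕_t x`
is a strictly increasing bijection of `[0,1]` onto `[x,y]`. -/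
theorem stmt_12 (A : UCA) (hMO : A.MO) (hUC : A.UC) (hLC : A.LC) :
    ∀ x ∈ Set.Icc (0:ℝ) 1, ∀ y ∈ Set.Icc (0:ℝ) 1, x < y →
      Set.Ioc x y ∩ A.E = ∅ →
      StrictMonoOn (fun t => A.op t y x) (Set.Icc (0:ℝ) 1) ∧
      Set.BijOn (fun t => A.op t y x) (Set.Icc (0:ℝ) 1) (Set.Icc x y) := by
  intro x hx y hy hxy hE
  set Γ := fun t => A.op t y x with hΓdef
  have hΓ0 : Γ 0 = x := A.proj0 y hy x hx
  have hΓ1 : Γ 1 = y := A.proj1 y hy x hx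
  have hΓlow : ∀ t ∈ Set.Icc (0:ℝ) 1, x ≤ Γ t := by
    intro t ht
    rcases eq_or_lt_of_le ht.1 with h0 | h0
    · rw [← h0, hΓ0]
    rcases eq_or_lt_of_le ht.2 with h1 | h1
    · rw [h1, hΓ1]; exact hxy.le
    · exact UCAProof.le_op A hMO ⟨h0, h1⟩ hy hx hxy.le

  have hΓhigh : ∀ t ∈ Set.Icc (0:ℝ) 1, Γ t ≤ y := by
    intro t ht
    rcases eq_or_lt_of_le ht.1 with h0 | h0
    · rw [← h0, hΓ0]; exact hxy.le
    rcases eq_or_lt_of_le ht.2 with h1 | h1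
    · rw [h1, hΓ1]
    · exact UCAProof.op_le A hMO ⟨h0, h1⟩ hy hx hxy.le
  have hΓI : ∀ t ∈ Set.Icc (0:ℝ) 1, Γ t ∈ Set.Icc (0:ℝ) 1 := by
    intro t ht
    exact ⟨le_trans hx.1 (hΓlow t ht), le_trans (hΓhigh t ht) hy.2⟩
  have hmono : ∀ p ∈ Set.Icc (0:ℝ) 1, ∀ q ∈ Set.Icc (0:ℝ) 1, p ≤ q → Γ p ≤ Γ q := by
    intro p hp q hq hpq
    rcases eq_or_lt_of_le hp.1 with h0 | h0
    · rw [← h0, hΓ0]; exact hΓlow q hq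
    rcases eq_or_lt_of_le hq.2 with h1 | h1
    · rw [h1, hΓ1]; exact hΓhigh p hp
    have hpI : p ∈ Set.Ioo (0:ℝ) 1 := ⟨h0, lt_of_le_of_lt hpq h1⟩
    have hqI : q ∈ Set.Ioo (0:ℝ) 1 := ⟨lt_of_lt_of_le h0 hpq, h1⟩
    exact UCAProof.param_mono A hMO hy hx hxy.le hpI hqI hpq
  have hIooev : ∀ᶠ q in 𝓝[<](1:ℝ), q ∈ Set.Ioo (0:ℝ) 1 := by
    rw [Filter.eventually_iff]
    exact Ioo_mem_nhdsLT_of_mem ⟨zero_lt_one, le_refl 1⟩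
  have hstrict : StrictMonoOn Γ (Set.Icc (0:ℝ) 1) := by
    intro p hp q hq hpq
    refine lt_of_le_of_ne (hmono p hp q hq hpq.le) ?_
    intro heq
    have hq0 : 0 < q := lt_of_le_of_lt hp.1 hpq
    by_cases hzx : Γ q = x
    · -- case B: Γ q = x with q > 0, contradicts (LC)
      have hq1 : q < 1 := by
        rcases eq_or_lt_of_le hq.2 with h1 | h1
        · exfalso; rw [h1, hΓ1] at hzx; exact absurd hzx (ne_of_gt hxy)
        · exact h1
      have hqI : q ∈ Set.Ioo (0:ℝ) 1 := ⟨hq0, hq1⟩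
      have hrI : (1-q) ∈ Set.Ioo (0:ℝ) 1 := ⟨by linarith, by linarith⟩
      have hbase : A.op (1-q) x y = x := by
        rw [← A.comm q hqI y hy x hx]
        exact hzx
      have hpow : ∀ n : ℕ, A.op ((1-q)^(n+1)) x y = x := by
        intro n
        induction n with
        | zero => simpa using hbase
        | succ n ih =>
          have hrn : (1-q)^(n+1) ∈ Set.Ioo (0:ℝ) 1 :=
            ⟨pow_pos hrI.1 _, pow_lt_one₀ hrI.1.le hrI.2 (Nat.succ_ne_zero n)⟩
          have h2 := UCAProof.collapse A hrn hrI hx hy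
          rw [ih, hbase] at h2
          rw [pow_succ]
          exact h2.symm
      have hall : ∀ s ∈ Set.Ioo (0:ℝ) 1, Γ s = x := by
        intro s hs
        obtain ⟨n, hn⟩ := exists_pow_lt_of_lt_one (by linarith [hs.2] : (0:ℝ) < 1 - s) hrI.2
        have hrn : (1-q)^(n+1) ∈ Set.Ioo (0:ℝ) 1 :=
          ⟨pow_pos hrI.1 _, pow_lt_one₀ hrI.1.le hrI.2 (Nat.succ_ne_zero n)⟩
        have hle : (1-q)^(n+1) ≤ 1 - s :=
          le_of_lt (lt_of_le_of_lt (pow_le_pow_of_le_one hrI.1.le hrI.2.le (Nat.le_succ n)) hn)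
        have hmem2 : 1 - (1-q)^(n+1) ∈ Set.Icc (0:ℝ) 1 :=
          ⟨by linarith [hrn.2], by linarith [hrn.1]⟩
        have h3 : Γ s ≤ Γ (1 - (1-q)^(n+1)) :=
          hmono s (UCAProof.IooIcc hs) _ hmem2 (by linarith)
        have h4 : Γ (1 - (1-q)^(n+1)) = x := by
          have hc := A.comm (1 - (1-q)^(n+1)) ⟨by linarith [hrn.2], by linarith [hrn.1]⟩ y hy x hx
          have : (1 : ℝ) - (1 - (1-q)^(n+1)) = (1-q)^(n+1) := by ring
          rw [this] at hc
          show A.op (1 - (1-q)^(n+1)) y x = x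
          rw [hc]
          exact hpow n
        rw [h4] at h3
        exact le_antisymm h3 (hΓlow s (UCAProof.IooIcc hs))
      have hlc := hLC x hx y hy hxy.le
      have hfreq : ∀ᶠ t in 𝓝[<](1:ℝ), (fun t => A.op t y x) t ≤ x :=
        hIooev.mono (fun t ht => (hall t ht).le)
      have hbdd : Filter.IsBoundedUnder (· ≥ ·) (𝓝[<](1:ℝ)) (fun t => A.op t y x) := by
        refine ⟨0, ?_⟩
        rw [Filter.eventually_map]
        filter_upwards [hIooev] with t ht
        exact (A.mem t (UCAProof.IooIcc ht) y hy x hx).1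
      have h5 := Filter.liminf_le_of_frequently_le hfreq.frequently hbdd
      linarith
    · -- case A: z := Γ q > x : z eats x, contradiction via kill.
      have hzIoc : Γ q ∈ Set.Ioc x y :=
        ⟨lt_of_le_of_ne (hΓlow q hq) (Ne.symm hzx), hΓhigh q hq⟩
      refine UCAProof.kill A hMO hUC hLC hx hy hxy hE hzIoc ?_
      have hp0 : 0 < p := by
        rcases eq_or_lt_of_le hp.1 with h0 | h0
        · exfalso
          rw [← h0, hΓ0] at heq
          exact hzx heq.symm
        · exact h0
      rcases eq_or_lt_of_le hq.2 with h1 | h1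
      · -- q = 1
        have hpI : p ∈ Set.Ioo (0:ℝ) 1 := ⟨hp0, by rw [← h1]; exact hpq⟩
        have h2 : A.op p y x = y := by
          have := heq
          rw [h1, hΓ1] at this
          exact this
        have heats : A.Eats y x := UCAProof.eats_of_single A hMO hy hx hxy.le hpI h2
        rw [h1, hΓ1]
        exact heats
      · have hqI : q ∈ Set.Ioo (0:ℝ) 1 := ⟨hq0, h1⟩
        have hpI : p ∈ Set.Ioo (0:ℝ) 1 := ⟨hp0, lt_trans hpq h1⟩
        have hrI : p/q ∈ Set.Ioo (0:ℝ) 1 := ⟨div_pos hp0 hq0, (div_lt_one hq0).2 hpq⟩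
        have hcoll : A.op (p/q) (A.op q y x) x = A.op (q*(p/q)) y x :=
          UCAProof.collapse A hqI hrI hy hx
        have hq' : q*(p/q) = p := by field_simp
        have hsingle : A.op (p/q) (Γ q) x = Γ q := by
          calc A.op (p/q) (Γ q) x = A.op (q*(p/q)) y x := hcoll
            _ = Γ p := by rw [hq']
            _ = Γ q := heq
        exact UCAProof.eats_of_single A hMO (hΓI q hq) hx (hΓlow q hq) hrI hsingle
  have hsurj : Set.SurjOn Γ (Set.Icc (0:ℝ) 1) (Set.Icc x y) := by
    intro c hc
    rcases eq_or_lt_of_le hc.1 with hcx | hcx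
    · exact ⟨0, ⟨le_refl 0, zero_le_one⟩, by rw [hΓ0, ← hcx]⟩
    rcases eq_or_lt_of_le hc.2 with hcy | hcy
    · exact ⟨1, ⟨zero_le_one, le_refl 1⟩, by rw [hΓ1, hcy]⟩
    set P := {p : ℝ | p ∈ Set.Icc (0:ℝ) 1 ∧ Γ p ≤ c} with hPdef
    have h0P : (0:ℝ) ∈ P := ⟨⟨le_refl 0, zero_le_one⟩, by rw [hΓ0]; exact hc.1⟩
    have hPne : P.Nonempty := ⟨0, h0P⟩
    have hPbdd : BddAbove P := ⟨1, fun p hp => hp.1.2⟩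
    set p₀ := sSup P with hp₀def
    have hp₀I : p₀ ∈ Set.Icc (0:ℝ) 1 :=
      ⟨le_csSup hPbdd h0P, csSup_le hPne (fun p hp => hp.1.2)⟩
    have hΓp₀I : Γ p₀ ∈ Set.Icc (0:ℝ) 1 := hΓI p₀ hp₀I
    have hΓp₀c : Γ p₀ ≤ c := by
      rcases eq_or_lt_of_le hp₀I.1 with h0 | h0
      · rw [← h0, hΓ0]; exact hc.1
      have hlc := hLC x hx (Γ p₀) hΓp₀I (hΓlow p₀ hp₀I)
      have hev : ∀ᶠ t in 𝓝[<](1:ℝ), A.op t (Γ p₀) x ≤ c := by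
        refine hIooev.mono (fun t ht => ?_)
        have heqc : A.op t (Γ p₀) x = Γ (p₀ * t) := by
          rcases eq_or_lt_of_le hp₀I.2 with h1 | h1
          · rw [h1, hΓ1]
            show A.op t y x = Γ (1 * t)
            rw [one_mul]
          · exact UCAProof.collapse A ⟨h0, h1⟩ ht hy hx
        rw [heqc]
        have hlt : p₀ * t < p₀ := by nlinarith [ht.2, ht.1]
        obtain ⟨u, huP, hu⟩ := exists_lt_of_lt_csSup hPne (by rw [← hp₀def]; exact hlt)
        have hptI : p₀ * t ∈ Set.Icc (0:ℝ) 1 :=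
          ⟨mul_nonneg hp₀I.1 ht.1.le, by nlinarith [hp₀I.2, ht.2, ht.1]⟩
        exact le_trans (hmono (p₀*t) hptI u huP.1 hu.le) huP.2
      have hbdd : Filter.IsBoundedUnder (· ≥ ·) (𝓝[<](1:ℝ)) (fun t => A.op t (Γ p₀) x) := by
        refine ⟨0, ?_⟩
        rw [Filter.eventually_map]
        filter_upwards [hIooev] with t ht
        exact (A.mem t (UCAProof.IooIcc ht) (Γ p₀) hΓp₀I x hx).1
      have h2 := Filter.liminf_le_of_frequently_le hev.frequently hbdd
      linarith
    have hp₀1 : p₀ < 1 := by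
      rcases eq_or_lt_of_le hp₀I.2 with h1 | h1
      · exfalso; rw [h1, hΓ1] at hΓp₀c; linarith
      · exact h1
    rcases eq_or_lt_of_le hΓp₀c with heqc | hltc
    · exact ⟨p₀, hp₀I, heqc⟩
    exfalso
    have hx₁I : Γ p₀ ∈ Set.Icc (0:ℝ) 1 := hΓp₀I
    have hx₁y : Γ p₀ ≤ y := hΓhigh p₀ hp₀I
    set W := sInf ((fun s => A.op s y (Γ p₀)) '' Set.Ioo (0:ℝ) 1) with hWdef
    have hId : ∀ s ∈ Set.Ioo (0:ℝ) 1, A.op s y (Γ p₀) = Γ (s + p₀*(1-s)) := by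
      intro s hs
      rcases eq_or_lt_of_le hp₀I.1 with h0 | h0
      · rw [← h0, hΓ0]
        have harg : s + (0:ℝ)*(1-s) = s := by ring
        rw [harg]
      · exact UCAProof.tail_id A hy hy hx hs ⟨h0, hp₀1⟩ (fun p' hp' => A.idem p' hp' y hy)
    have hq'mem : ∀ s ∈ Set.Ioo (0:ℝ) 1, (s + p₀*(1-s)) ∈ Set.Icc (0:ℝ) 1 ∧ p₀ < s + p₀*(1-s) := by
      intro s hs
      constructor
      · constructor
        · nlinarith [hp₀I.1, hs.1, hs.2]
        · nlinarith [hp₀I.2, hs.2, hs.1]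
      · nlinarith [hs.1, hp₀1]
    have h12' : (1/2:ℝ) ∈ Set.Ioo (0:ℝ) 1 := ⟨by norm_num, by norm_num⟩
    have hWne : ((fun s => A.op s y (Γ p₀)) '' Set.Ioo (0:ℝ) 1).Nonempty :=
      ⟨_, Set.mem_image_of_mem _ h12'⟩
    have hWlb : ∀ v ∈ (fun s => A.op s y (Γ p₀)) '' Set.Ioo (0:ℝ) 1, Γ p₀ ≤ v := by
      rintro v ⟨s, hs, rfl⟩
      exact UCAProof.le_op A hMO hs hy hx₁I hx₁y
    have hWc : c ≤ W := by
      rw [hWdef]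
      apply le_csInf hWne
      rintro v ⟨s, hs, rfl⟩
      show c ≤ A.op s y (Γ p₀)
      rw [hId s hs]
      by_contra hcon
      push_neg at hcon
      have hmemP : (s + p₀*(1-s)) ∈ P := ⟨(hq'mem s hs).1, hcon.le⟩
      exact absurd (le_csSup hPbdd hmemP) (not_le.2 (hq'mem s hs).2)
    have h13 : (1/3 : ℝ) ∈ Set.Ioo (0:ℝ) 1 := ⟨by norm_num, by norm_num⟩
    have h23 : (2/3 : ℝ) ∈ Set.Ioo (0:ℝ) 1 := ⟨by norm_num, by norm_num⟩
    have hW1 : W < 1 := by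
      have hq1 := (hq'mem _ h13).1
      have hq2 := (hq'mem _ h23).1
      have hlt : (1/3 : ℝ) + p₀*(1-1/3) < 2/3 + p₀*(1-2/3) := by nlinarith [hp₀1]
      have hW_le : W ≤ Γ ((1/3:ℝ) + p₀*(1-1/3)) := by
        rw [hWdef, ← hId _ h13]
        exact csInf_le ⟨Γ p₀, hWlb⟩ (Set.mem_image_of_mem _ h13)
      have h2 := hstrict hq1 hq2 hlt
      have h3 : Γ ((2/3:ℝ) + p₀*(1-2/3)) ≤ 1 := (hΓI _ hq2).2
      linarith
    obtain ⟨hx₁W, hWy, hEW⟩ := UCAProof.V_eats A hMO hUC hy hx₁I hx₁y W hWdef hW1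
    have hWI : W ∈ Set.Icc (0:ℝ) 1 := ⟨le_trans hx₁I.1 hx₁W, le_trans hWy hy.2⟩
    have hxW : x < W := lt_of_lt_of_le hcx hWc
    have hEW0 : A.Eats W 0 :=
      UCAProof.eats_down A hMO hUC hLC hWI hx₁I ⟨le_refl 0, zero_le_one⟩ hW1 hx₁I.1
        (lt_of_lt_of_le hltc hWc) hEW
    have hmem : W ∈ Set.Ioc x y ∩ A.E := ⟨⟨hxW, hWy⟩, hWI, hEW0⟩
    rw [hE] at hmem
    exact hmem
  exact ⟨hstrict, fun t ht => ⟨hΓlow t ht, hΓhigh t ht⟩, hstrict.injOn, hsurj⟩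
end

section
/- Let ⟨X, ⊕_p⟩ be a convex algebra, let x_1, …, x_n ∈ X and p_1, …, p_n ≥ 0 with Σ_{i=1}^n p_i = 1, and let j ∈ {1,…,n} be such that p_j > 0. Define y_i := x_j if x_j eats x_i, and y_i := x_i otherwise. Then the n-ary convex combinations agree: ⊕_{i=1}^n p_i x_i = ⊕_{i=1}^n p_i y_i. -/
open Set Filter Topology

/-- A convex algebra on a set `X`: `op p x y` denotes `x ⊕_p y`, for `p ∈ (0,1)`,
extended to `p ∈ [0,1]` by the projection axioms `x ⊕_1 y = x` and `x ⊕_0 y = y`. -/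
structure ConvexAlg (X : Type*) where
  op : ℝ → X → X → X
  idem : ∀ p ∈ Set.Ioo (0:ℝ) 1, ∀ x : X, op p x x = x
  comm : ∀ p ∈ Set.Ioo (0:ℝ) 1, ∀ x y : X, op p x y = op (1 - p) y x
  assoc : ∀ p ∈ Set.Ioo (0:ℝ) 1, ∀ q ∈ Set.Ioo (0:ℝ) 1, ∀ x y z : X,
      op q (op p x y) z = op (p * q) x (op ((1 - p) * q / (1 - p * q)) y z)
  proj1 : ∀ x y : X, op 1 x y = x
  proj0 : ∀ x y : X, op 0 x y = y

/-- `y ⊳ x` : `y` eats `x`, i.e. `y ⊕_t x = y` for all `t ∈ (0,1]`. -/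
def ConvexAlg.Eats {X : Type*} (A : ConvexAlg X) (y x : X) : Prop :=
  ∀ t ∈ Set.Ioc (0:ℝ) 1, A.op t y x = y

/-- The `n`-ary convex combination `⊕_{i=1}^n p_i x_i`, defined inductively from the
binary operations: it equals `x_1` when `p_1 = 1`, and
`x_1 ⊕_{p_1} (⊕_{i=2}^n (p_i/(1-p_1)) x_i)` when `p_1 < 1`. -/
noncomputable def ConvexAlg.mixVec {X : Type*} (A : ConvexAlg X) :
    (n : ℕ) → (Fin (n + 1) → ℝ) → (Fin (n + 1) → X) → X
  | 0, _, x => x 0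
  | n + 1, p, x =>
      if p 0 = 1 then x 0
      else A.op (p 0) (x 0)
        (A.mixVec n (fun i => p i.succ / (1 - p 0)) (fun i => x i.succ))

namespace ConvexAlg

variable {X : Type*} (A : ConvexAlg X)

private lemma q'_mem {p q : ℝ} (hp : p ∈ Set.Ioo (0:ℝ) 1) (hq : q ∈ Set.Ioo (0:ℝ) 1) :
    p + q - p * q ∈ Set.Ioo (0:ℝ) 1 := by
  obtain ⟨hp0, hp1⟩ := hp; obtain ⟨hq0, hq1⟩ := hq
  constructor <;> nlinarith

private lemma p'_mem {p q : ℝ} (hp : p ∈ Set.Ioo (0:ℝ) 1) (hq : q ∈ Set.Ioo (0:ℝ) 1) :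
    p / (p + q - p * q) ∈ Set.Ioo (0:ℝ) 1 := by
  have hq' := q'_mem hp hq
  obtain ⟨hp0, hp1⟩ := hp; obtain ⟨hq0, hq1⟩ := hq
  constructor
  · exact div_pos hp0 hq'.1
  · rw [div_lt_one hq'.1]; nlinarith

lemma preassoc {p q : ℝ} (hp : p ∈ Set.Ioo (0:ℝ) 1) (hq : q ∈ Set.Ioo (0:ℝ) 1)
    (y a z : X) :
    A.op p y (A.op q a z)
      = A.op (p + q - p * q) (A.op (p / (p + q - p * q)) y a) z := by
  have hq' := q'_mem hp hq
  have hp' := p'_mem hp hq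
  rw [A.assoc _ hp' _ hq' y a z]
  have hne : p + q - p * q ≠ 0 := ne_of_gt hq'.1
  have h1 : p / (p + q - p * q) * (p + q - p * q) = p := div_mul_cancel₀ _ hne
  have h2 : (1 - p / (p + q - p * q)) * (p + q - p * q) / (1 - p) = q := by
    have hne2 : (1 : ℝ) - p ≠ 0 := by have := hp.2; intro h; linarith [hp.2]
    field_simp
    ring
  rw [h1, h2]

lemma slide {p q : ℝ} (hp : p ∈ Set.Ioo (0:ℝ) 1) (hq : q ∈ Set.Ioo (0:ℝ) 1)
    (y a z : X) :
    A.op p y (A.op q a z)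
      = A.op (q * (1 - p)) a (A.op (p / (1 - q * (1 - p))) y z) := by
  have hq' := q'_mem hp hq
  have hp' := p'_mem hp hq
  have hp'' : 1 - p / (p + q - p * q) ∈ Set.Ioo (0:ℝ) 1 :=
    ⟨by linarith [hp'.2], by linarith [hp'.1]⟩
  rw [A.preassoc hp hq y a z, A.comm _ hp' y a, A.assoc _ hp'' _ hq' a y z]
  have hne : p + q - p * q ≠ 0 := ne_of_gt hq'.1
  have h3 : (1 - p / (p + q - p * q)) * (p + q - p * q) = q * (1 - p) := by
    field_simp; ring
  have h5 : (1 - (1 - p / (p + q - p * q))) * (p + q - p * q) = p := by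
    field_simp; ring
  rw [h3, h5]

lemma absorb {p q : ℝ} (hp : p ∈ Set.Ioo (0:ℝ) 1) (hq : q ∈ Set.Ioo (0:ℝ) 1)
    {y x : X} (h : A.Eats y x) (z : X) :
    A.op p y (A.op q x z) = A.op p y (A.op q y z) := by
  have hp' := p'_mem hp hq
  rw [A.preassoc hp hq y x z, A.preassoc hp hq y y z,
    h _ ⟨hp'.1, hp'.2.le⟩, A.idem _ hp' y]

private lemma weight_zero {n : ℕ} (q : Fin (n + 1) → ℝ) (hq : ∀ i, 0 ≤ q i)
    (hs : ∑ i, q i = 1) (h1 : q 0 = 1) (k : Fin (n + 1)) (hk : k ≠ 0) : q k = 0 := by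
  have hle : q 0 + q k ≤ ∑ i, q i := by
    calc q 0 + q k = ∑ i ∈ ({0, k} : Finset (Fin (n+1))), q i :=
          (Finset.sum_pair (Ne.symm hk)).symm
      _ ≤ ∑ i, q i :=
          Finset.sum_le_sum_of_subset_of_nonneg (Finset.subset_univ _) (fun i _ _ => hq i)
  have := hq k
  linarith

private lemma head_le_one {n : ℕ} (q : Fin (n + 1) → ℝ) (hq : ∀ i, 0 ≤ q i)
    (hs : ∑ i, q i = 1) : q 0 ≤ 1 := by
  have := Finset.single_le_sum (f := q) (fun i _ => hq i) (Finset.mem_univ 0)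
  linarith

private lemma tail_nonneg {n : ℕ} (q : Fin (n + 2) → ℝ) (hq : ∀ i, 0 ≤ q i)
    (h : q 0 < 1) : ∀ i : Fin (n + 1), 0 ≤ q i.succ / (1 - q 0) :=
  fun i => div_nonneg (hq i.succ) (by linarith)

private lemma tail_sum {n : ℕ} (q : Fin (n + 2) → ℝ) (hs : ∑ i, q i = 1)
    (h : q 0 < 1) : ∑ i : Fin (n + 1), q i.succ / (1 - q 0) = 1 := by
  rw [← Finset.sum_div]
  rw [Fin.sum_univ_succ] at hs
  have h2 : ∑ i : Fin (n + 1), q i.succ = 1 - q 0 := by linarith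
  rw [h2, div_self (by linarith : (1:ℝ) - q 0 ≠ 0)]

/-- An element inside the mix with positive weight can replace an eaten head. -/
private lemma lemG : ∀ (n : ℕ) (q : Fin (n + 1) → ℝ) (w : Fin (n + 1) → X),
    (∀ i, 0 ≤ q i) → (∑ i, q i = 1) →
    ∀ k, 0 < q k → ∀ a : X, A.Eats (w k) a →
    ∀ p ∈ Set.Ioo (0:ℝ) 1,
    A.op p a (A.mixVec n q w) = A.op p (w k) (A.mixVec n q w) := by
  intro n
  induction n with
  | zero =>
    intro q w hq hs k hk a he p hp
    have hk0 : k = 0 := by omega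
    subst hk0
    show A.op p a (w 0) = A.op p (w 0) (w 0)
    rw [A.idem _ hp, A.comm _ hp, he _ ⟨by linarith [hp.2], by linarith [hp.1]⟩]
  | succ n IH =>
    intro q w hq hs k hk a he p hp
    simp only [mixVec]
    by_cases h1 : q 0 = 1
    · simp only [if_pos h1]
      have hk0 : k = 0 := by
        by_contra hne
        have := weight_zero q hq hs h1 k hne
        linarith
      subst hk0
      rw [A.idem _ hp, A.comm _ hp, he _ ⟨by linarith [hp.2], by linarith [hp.1]⟩]
    · simp only [if_neg h1]
      have h0lt : q 0 < 1 := lt_of_le_of_ne (head_le_one q hq hs) h1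
      have hq'n := tail_nonneg q hq h0lt
      have hq's := tail_sum q hs h0lt
      by_cases hk0 : k = 0
      · subst hk0
        have h00 : q 0 ∈ Set.Ioo (0:ℝ) 1 := ⟨hk, h0lt⟩
        have hp' := p'_mem hp h00
        rw [A.preassoc hp h00 a (w 0) _, A.preassoc hp h00 (w 0) (w 0) _,
          A.idem _ hp' (w 0), A.comm _ hp' a (w 0),
          he _ ⟨by linarith [hp'.2], by linarith [hp'.1]⟩]
      · obtain ⟨kk, rfl⟩ := Fin.eq_succ_of_ne_zero hk0
        have hk' : 0 < q kk.succ / (1 - q 0) := div_pos hk (by linarith)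
        rcases eq_or_lt_of_le (hq 0) with h00 | h00
        · have hop : ∀ z t : X, A.op (q 0) z t = t := fun z t => by
            rw [← h00]; exact A.proj0 z t
          simp only [hop]
          exact IH (fun i => q i.succ / (1 - q 0)) (fun i => w i.succ)
            hq'n hq's kk hk' a he p hp
        · have h0 : q 0 ∈ Set.Ioo (0:ℝ) 1 := ⟨h00, h0lt⟩
          rw [A.slide hp h0 a (w 0) _, A.slide hp h0 (w kk.succ) (w 0) _]
          refine congrArg (A.op _ _) ?_
          have hP : p / (1 - q 0 * (1 - p)) ∈ Set.Ioo (0:ℝ) 1 := by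
            have hd : 0 < 1 - q 0 * (1 - p) := by nlinarith [hp.1, hp.2]
            constructor
            · exact div_pos hp.1 hd
            · rw [div_lt_one hd]; nlinarith [hp.2]
          exact IH (fun i => q i.succ / (1 - q 0)) (fun i => w i.succ)
            hq'n hq's kk hk' a he _ hP

/-- Eaten elements inside the mix can be replaced by the (eating) head. -/
private lemma lemH : ∀ (n : ℕ) (q : Fin (n + 1) → ℝ) (w w' : Fin (n + 1) → X),
    (∀ i, 0 ≤ q i) → (∑ i, q i = 1) →
    ∀ (k : Fin (n + 1)) (y : X), A.Eats y (w k) → w' k = y →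
    (∀ m, m ≠ k → w' m = w m) →
    ∀ p ∈ Set.Ioc (0:ℝ) 1,
    A.op p y (A.mixVec n q w) = A.op p y (A.mixVec n q w') := by
  intro n
  induction n with
  | zero =>
    intro q w w' hq hs k y he hk hm p hp
    have hk0 : k = 0 := by omega
    subst hk0
    show A.op p y (w 0) = A.op p y (w' 0)
    rw [hk]
    rcases eq_or_lt_of_le hp.2 with h1 | h1
    · rw [h1, A.proj1, A.proj1]
    · rw [he _ ⟨hp.1, hp.2⟩, A.idem _ ⟨hp.1, h1⟩]
  | succ n IH =>
    intro q w w' hq hs k y he hk hm p hp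
    simp only [mixVec]
    by_cases h1 : q 0 = 1
    · simp only [if_pos h1]
      by_cases hk0 : k = 0
      · subst hk0
        rw [hk]
        rcases eq_or_lt_of_le hp.2 with hp1 | hp1
        · rw [hp1, A.proj1, A.proj1]
        · rw [he _ ⟨hp.1, hp.2⟩, A.idem _ ⟨hp.1, hp1⟩]
      · rw [hm 0 (Ne.symm hk0)]
    · simp only [if_neg h1]
      have h0lt : q 0 < 1 := lt_of_le_of_ne (head_le_one q hq hs) h1
      have hq'n := tail_nonneg q hq h0lt
      have hq's := tail_sum q hs h0lt
      by_cases hk0 : k = 0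
      · subst hk0
        have hTT : (fun i : Fin (n+1) => w' i.succ) = (fun i => w i.succ) :=
          funext fun i => hm i.succ (Fin.succ_ne_zero i)
        rw [hk, hTT]
        rcases eq_or_lt_of_le (hq 0) with h00 | h00
        · have hop : ∀ z t : X, A.op (q 0) z t = t := fun z t => by
            rw [← h00]; exact A.proj0 z t
          simp only [hop]
        · rcases eq_or_lt_of_le hp.2 with hp1 | hp1
          · rw [hp1, A.proj1, A.proj1]
          · exact A.absorb ⟨hp.1, hp1⟩ ⟨h00, h0lt⟩ he _
      · obtain ⟨kk, rfl⟩ := Fin.eq_succ_of_ne_zero hk0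
        rw [hm 0 (Ne.symm hk0)]
        have hm' : ∀ m : Fin (n+1), m ≠ kk → w' m.succ = w m.succ :=
          fun m hmne => hm m.succ (fun h => hmne (Fin.succ_injective _ h))
        rcases eq_or_lt_of_le (hq 0) with h00 | h00
        · have hop : ∀ z t : X, A.op (q 0) z t = t := fun z t => by
            rw [← h00]; exact A.proj0 z t
          simp only [hop]
          exact IH (fun i => q i.succ / (1 - q 0)) (fun i => w i.succ)
            (fun i => w' i.succ) hq'n hq's kk y he hk hm' p hp
        · rcases eq_or_lt_of_le hp.2 with hp1 | hp1
          · rw [hp1, A.proj1, A.proj1]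
          · rw [A.slide ⟨hp.1, hp1⟩ ⟨h00, h0lt⟩ y (w 0) _,
              A.slide ⟨hp.1, hp1⟩ ⟨h00, h0lt⟩ y (w 0) _]
            refine congrArg (A.op _ _) ?_
            have hP : p / (1 - q 0 * (1 - p)) ∈ Set.Ioc (0:ℝ) 1 := by
              have hd : 0 < 1 - q 0 * (1 - p) := by nlinarith [hp.1, hp1]
              constructor
              · exact div_pos hp.1 hd
              · rw [div_le_one hd]; nlinarith [hp1]
            exact IH (fun i => q i.succ / (1 - q 0)) (fun i => w i.succ)
              (fun i => w' i.succ) hq'n hq's kk y he hk hm' _ hP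

/-- Single-coordinate replacement: if `v j` eats `v i` and `p j > 0`, the value of
the mix is unchanged when `v i` is replaced by `v j`. -/
private lemma lemL : ∀ (n : ℕ) (p : Fin (n + 1) → ℝ) (v w : Fin (n + 1) → X),
    (∀ i, 0 ≤ p i) → (∑ i, p i = 1) →
    ∀ (j i : Fin (n + 1)), 0 < p j → A.Eats (v j) (v i) → w i = v j →
    (∀ m, m ≠ i → w m = v m) →
    A.mixVec n p v = A.mixVec n p w := by
  intro n
  induction n with
  | zero =>
    intro p v w hp hs j i hj he hwi hwm
    have hji : i = j := by omega
    have hw : w = v := funext fun m => by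
      have hm0 : m = i := by omega
      subst hm0; rw [hwi, hji]
    rw [hw]
  | succ n IH =>
    intro p v w hp hs j i hj he hwi hwm
    by_cases hij : i = j
    · have hw : w = v := funext fun m => by
        by_cases hmi : m = i
        · subst hmi; rw [hwi, hij]
        · exact hwm m hmi
      rw [hw]
    · by_cases h1 : p 0 = 1
      · have hj0 : j = 0 := by
          by_contra hne
          have := weight_zero p hp hs h1 j hne
          linarith
        have hi0 : i ≠ 0 := fun h => hij (h.trans hj0.symm)
        simp only [mixVec, if_pos h1]
        exact (hwm 0 (Ne.symm hi0)).symm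
      · have h0lt : p 0 < 1 := lt_of_le_of_ne (head_le_one p hp hs) h1
        have hq'n := tail_nonneg p hp h0lt
        have hq's := tail_sum p hs h0lt
        simp only [mixVec, if_neg h1]
        by_cases hi0 : i = 0
        · subst hi0
          have hj0 : j ≠ 0 := Ne.symm hij
          obtain ⟨jj, rfl⟩ := Fin.eq_succ_of_ne_zero hj0
          have hTT : (fun m : Fin (n+1) => w m.succ) = (fun m => v m.succ) :=
            funext fun m => hwm m.succ (Fin.succ_ne_zero m)
          rw [hwi, hTT]
          rcases eq_or_lt_of_le (hp 0) with h00 | h00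
          · have hop : ∀ z t : X, A.op (p 0) z t = t := fun z t => by
              rw [← h00]; exact A.proj0 z t
            simp only [hop]
          · exact A.lemG n _ _ hq'n hq's jj (div_pos hj (by linarith)) (v 0) he
              (p 0) ⟨h00, h0lt⟩
        · obtain ⟨ii, rfl⟩ := Fin.eq_succ_of_ne_zero hi0
          have hm' : ∀ m : Fin (n+1), m ≠ ii → w m.succ = v m.succ :=
            fun m hmne => hwm m.succ (fun h => hmne (Fin.succ_injective _ h))
          by_cases hj0 : j = 0
          · subst hj0
            rw [hwm 0 (Ne.symm hi0)]
            exact A.lemH n _ _ _ hq'n hq's ii (v 0) he hwi hm' (p 0)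
              ⟨hj, by linarith⟩
          · obtain ⟨jj, rfl⟩ := Fin.eq_succ_of_ne_zero hj0
            rw [hwm 0 (Ne.symm hi0)]
            refine congrArg (A.op _ _) ?_
            exact IH _ _ _ hq'n hq's jj ii (div_pos hj (by linarith)) he hwi hm'

end ConvexAlg

/-- Lemma 2.8: let `⟨X, ⊕_p⟩` be a convex algebra, `x_1, …, x_n ∈ X`,
`p_1, …, p_n ≥ 0` with `Σ p_i = 1`, and `j` with `p_j > 0`.  If `y_i = x_j`
whenever `x_j ⊳ x_i` and `y_i = x_i` otherwise, then
`⊕_{i=1}^n p_i x_i = ⊕_{i=1}^n p_i y_i`. -/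
theorem stmt_13 {X : Type*} (A : ConvexAlg X) (n : ℕ)
    (p : Fin (n + 1) → ℝ) (x : Fin (n + 1) → X)
    (hp : ∀ i, 0 ≤ p i) (hsum : ∑ i, p i = 1)
    (j : Fin (n + 1)) (hj : 0 < p j)
    (y : Fin (n + 1) → X)
    (hy : ∀ i, (A.Eats (x j) (x i) ∧ y i = x j) ∨ (¬ A.Eats (x j) (x i) ∧ y i = x i)) :
    A.mixVec n p x = A.mixVec n p y := by
  have hyj : y j = x j := by rcases hy j with ⟨_, h⟩ | ⟨_, h⟩ <;> exact h
  have key : ∀ k : ℕ,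
      A.mixVec n p x = A.mixVec n p (fun i => if (i : ℕ) < k then y i else x i) := by
    intro k
    induction k with
    | zero =>
      have h0 : (fun i : Fin (n+1) => if (i : ℕ) < 0 then y i else x i) = x :=
        funext fun i => by simp
      rw [h0]
    | succ k ih =>
      by_cases hk : k < n + 1
      · set i : Fin (n + 1) := ⟨k, hk⟩ with hidef
        have hvj : (if (j : ℕ) < k then y j else x j) = x j := by
          split_ifs with h
          · exact hyj
          · rfl
        rcases hy i with ⟨he, hyi⟩ | ⟨hne, hyi⟩
        · refine ih.trans (A.lemL n p _ _ hp hsum j i hj ?_ ?_ ?_)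
          · show A.Eats (if (j : ℕ) < k then y j else x j)
              (if (i : ℕ) < k then y i else x i)
            rw [hvj, if_neg (by simp [hidef])]
            exact he
          · show (if (i : ℕ) < k + 1 then y i else x i)
              = (if (j : ℕ) < k then y j else x j)
            rw [hvj, if_pos (by simp [hidef]), hyi]
          · intro m hmi
            show (if (m : ℕ) < k + 1 then y m else x m)
              = (if (m : ℕ) < k then y m else x m)
            by_cases hm : (m : ℕ) < k
            · rw [if_pos (Nat.lt_succ_of_lt hm), if_pos hm]
            · have : (m : ℕ) ≠ k := fun h => hmi (Fin.ext (by simp [hidef, h]))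
              rw [if_neg (by omega), if_neg hm]
        · refine ih.trans (congrArg (A.mixVec n p) (funext fun m => ?_))
          by_cases hm : (m : ℕ) < k
          · rw [if_pos hm, if_pos (Nat.lt_succ_of_lt hm)]
          · by_cases hm2 : (m : ℕ) = k
            · have hmi : m = i := Fin.ext (by simp [hidef, hm2])
              subst hmi
              rw [if_neg hm, if_pos (by omega), hyi]
            · rw [if_neg hm, if_neg (by omega)]
      · refine ih.trans (congrArg (A.mixVec n p) (funext fun m => ?_))
        have h1 : (m : ℕ) < k := lt_of_lt_of_le m.isLt (le_of_not_gt hk)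
        rw [if_pos h1, if_pos (Nat.lt_succ_of_lt h1)]
  have hfin := key (n + 1)
  have hfull : (fun i : Fin (n+1) => if (i : ℕ) < n + 1 then y i else x i) = y :=
    funext fun i => if_pos i.isLt
  rwa [hfull] at hfin
end

section
/- Let ⟨[0,1], ⊕_p⟩ be a convex algebra satisfying (MO) and (UC). Let A be a nonempty set, (x_a)_{a∈A} ∈ [0,1]^A, and (p_a)_{a∈A} a finitely supported family of nonnegative reals with Σ_{a∈A} p_a = 1. Let a_0 ∈ A with p_{a_0} > 0. Then ⊕_{a∈A} p_a x_a = ⊕_{a∈A} p_a · max{x_a, V_{0, x_{a_0}}}. -/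
open Set Filter Topology Classical

/-- The convex combination of a finite list of (weight, element) pairs, built
inductively from the binary operations: with `W` the total weight of the list,
`⊕ ((p,x) :: l) = x` if `p = W` (i.e. the normalized first weight is `1`), and
`x ⊕_{p/W} (⊕ l)` otherwise.  (For a list of total weight `1` this is exactly
`⊕ p_i x_i = x_1 ⊕_{p_1} (⊕ (p_i/(1-p_1)) x_i)` when `p_1 < 1`, and `x_1` when
`p_1 = 1`.) -/
noncomputable def UCA.mixList (A : UCA) : List (ℝ × ℝ) → ℝ
  | [] => 0
  | (p, x) :: l =>
      if p = p + (l.map Prod.fst).sum then x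
      else A.op (p / (p + (l.map Prod.fst).sum)) x (A.mixList l)

/-- The convex combination `⊕_{a∈A} p_a x_a` of a finitely supported family:
the finite convex combination over the support of `(p_a)` (by parametric
commutativity and associativity it does not depend on the enumeration of the
support). -/
noncomputable def UCA.mixFam (A : UCA) {α : Type*} (p : α → ℝ) (x : α → ℝ) : ℝ :=
  if h : (Function.support p).Finite then
    A.mixList (h.toFinset.toList.map fun a => (p a, x a))
  else 0


namespace UCAhelp

lemma mem0 : (0:ℝ) ∈ Set.Icc (0:ℝ) 1 := ⟨le_refl _, zero_le_one⟩
lemma mem1 : (1:ℝ) ∈ Set.Icc (0:ℝ) 1 := ⟨zero_le_one, le_refl _⟩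

variable (A : UCA)

/-- second-argument monotonicity, from (MO) and parametric commutativity -/
lemma mono2 (hMO : A.MO) {p x y y' : ℝ} (hp : p ∈ Set.Ioo (0:ℝ) 1)
    (hx : x ∈ Set.Icc (0:ℝ) 1) (hy : y ∈ Set.Icc (0:ℝ) 1) (hy' : y' ∈ Set.Icc (0:ℝ) 1)
    (h : y ≤ y') : A.op p x y ≤ A.op p x y' := by
  rw [A.comm p hp x hx y hy, A.comm p hp x hx y' hy']
  exact hMO y hy y' hy' x hx (1 - p) ⟨by linarith [hp.2], by linarith [hp.1]⟩ h

/-- `(y ⊕_a 0) ⊕_b 0 = y ⊕_{ab} 0` -/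
lemma scale {y a b : ℝ} (hy : y ∈ Set.Icc (0:ℝ) 1) (ha : a ∈ Set.Ioo (0:ℝ) 1)
    (hb : b ∈ Set.Ioo (0:ℝ) 1) :
    A.op b (A.op a y 0) 0 = A.op (a * b) y 0 := by
  have hc : (1 - a) * b / (1 - a * b) ∈ Set.Ioo (0:ℝ) 1 := by
    have h1 : (0:ℝ) < 1 - a * b := by nlinarith [ha.1, ha.2, hb.1, hb.2]
    constructor
    · apply div_pos (by nlinarith [ha.2, hb.1]) h1
    · rw [div_lt_one h1]; nlinarith [ha.1, hb.2]
  rw [A.assoc a ha b hb y hy 0 mem0 0 mem0, A.idem _ hc 0 mem0]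

/-- `w ⊕_b 0 ≤ w` -/
lemma op_zero_le {w b : ℝ} (hMO : A.MO) (hw : w ∈ Set.Icc (0:ℝ) 1)
    (hb : b ∈ Set.Ioo (0:ℝ) 1) : A.op b w 0 ≤ w := by
  have h := A.comm b hb w hw 0 mem0
  rw [h]
  have h2 := hMO 0 mem0 w hw w hw (1 - b) ⟨by linarith [hb.2], by linarith [hb.1]⟩ hw.1
  rw [A.idem (1 - b) ⟨by linarith [hb.2], by linarith [hb.1]⟩ w hw] at h2
  exact h2

/-- `q ↦ y ⊕_q 0` is monotone -/
lemma gMono (hMO : A.MO) {y q q' : ℝ} (hy : y ∈ Set.Icc (0:ℝ) 1)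
    (h0 : 0 < q) (hqq' : q ≤ q') (h1 : q' ≤ 1) :
    A.op q y 0 ≤ A.op q' y 0 := by
  rcases eq_or_lt_of_le hqq' with rfl | hlt
  · exact le_refl _
  rcases eq_or_lt_of_le h1 with rfl | hq'1
  · rw [A.proj1 y hy 0 mem0]
    exact op_zero_le A hMO hy ⟨h0, hlt⟩
  · have hb : q / q' ∈ Set.Ioo (0:ℝ) 1 := ⟨div_pos h0 (h0.trans hlt),
      (div_lt_one (h0.trans hlt)).2 hlt⟩
    have hsc := scale A hy ⟨h0.trans hlt, hq'1⟩ hb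
    have he : q' * (q / q') = q := by
      rw [mul_comm, div_mul_cancel₀ _ (ne_of_gt (h0.trans hlt))]
    rw [he] at hsc
    rw [← hsc]
    exact op_zero_le A hMO (A.mem q' ⟨by linarith, by linarith⟩ y hy 0 mem0) hb

/-- `y ⊕_p (y ⊕_c 0) = y ⊕_{p + c(1-p)} 0` -/
lemma merge {y p c : ℝ} (hy : y ∈ Set.Icc (0:ℝ) 1) (hp : p ∈ Set.Ioo (0:ℝ) 1)
    (hc : c ∈ Set.Ioo (0:ℝ) 1) :
    A.op p y (A.op c y 0) = A.op (p + c * (1 - p)) y 0 := by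
  set q := p + c * (1 - p) with hqdef
  have hq : q ∈ Set.Ioo (0:ℝ) 1 := ⟨by nlinarith [hp.1, hp.2, hc.1], by nlinarith [hp.2, hc.2]⟩
  have ha : p / q ∈ Set.Ioo (0:ℝ) 1 := ⟨div_pos hp.1 hq.1,
    (div_lt_one hq.1).2 (by nlinarith [hp.2, hc.1])⟩
  have h := A.assoc (p / q) ha q hq y hy y hy 0 mem0
  rw [A.idem (p / q) ha y hy] at h
  have e1 : p / q * q = p := div_mul_cancel₀ _ (ne_of_gt hq.1)
  rw [e1] at h
  have e2 : (1 - p / q) * q / (1 - p) = c := by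
    have h1p : (1:ℝ) - p ≠ 0 := by linarith [hp.2]
    have hqne : q ≠ 0 := ne_of_gt hq.1
    field_simp
    ring
  rw [e2] at h
  exact h.symm
/-- basic facts about `V 0 y` -/
lemma Vset_ne {y : ℝ} : ((fun p => A.op p y (0:ℝ)) '' Set.Ioc 0 1).Nonempty :=
  ⟨A.op 1 y 0, ⟨1, ⟨zero_lt_one, le_refl 1⟩, rfl⟩⟩

lemma Vset_bdd {y : ℝ} (hy : y ∈ Set.Icc (0:ℝ) 1) :
    ∀ z ∈ ((fun p => A.op p y (0:ℝ)) '' Set.Ioc 0 1), 0 ≤ z := by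
  rintro z ⟨q, hq, rfl⟩
  exact (A.mem q ⟨le_of_lt hq.1, hq.2⟩ y hy 0 mem0).1

lemma V_nonneg {y : ℝ} (hy : y ∈ Set.Icc (0:ℝ) 1) : 0 ≤ A.V 0 y :=
  le_csInf (Vset_ne A) (Vset_bdd A hy)

lemma V_le {y q : ℝ} (hy : y ∈ Set.Icc (0:ℝ) 1) (hq : q ∈ Set.Ioc (0:ℝ) 1) :
    A.V 0 y ≤ A.op q y 0 :=
  csInf_le ⟨0, Vset_bdd A hy⟩ ⟨q, hq, rfl⟩

lemma V_le_self {y : ℝ} (hy : y ∈ Set.Icc (0:ℝ) 1) : A.V 0 y ≤ y := by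
  have h := V_le A hy (q := 1) ⟨zero_lt_one, le_refl 1⟩
  rwa [A.proj1 y hy 0 mem0] at h

lemma V_mem {y : ℝ} (hy : y ∈ Set.Icc (0:ℝ) 1) : A.V 0 y ∈ Set.Icc (0:ℝ) 1 :=
  ⟨V_nonneg A hy, (V_le_self A hy).trans hy.2⟩

/-- THE core lemma: `y ⊕_p V_{0,y} = y ⊕_p 0` for `p ∈ (0,1)`. -/
lemma binV (hMO : A.MO) (hUC : A.UC) {y p : ℝ} (hy : y ∈ Set.Icc (0:ℝ) 1)
    (hp : p ∈ Set.Ioo (0:ℝ) 1) :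
    A.op p y (A.V 0 y) = A.op p y 0 := by
  have hv : A.V 0 y ∈ Set.Icc (0:ℝ) 1 := V_mem A hy
  set S : Set ℝ := (fun q => A.op q y 0) '' Set.Ioo p 1 with hS
  have hSne : S.Nonempty := ⟨_, ⟨(p + 1) / 2, ⟨by linarith [hp.2], by linarith [hp.2]⟩, rfl⟩⟩
  have hSbdd : BddBelow S := by
    refine ⟨0, ?_⟩
    rintro z ⟨q, hq, rfl⟩
    exact (A.mem q ⟨le_of_lt (hp.1.trans hq.1), le_of_lt hq.2⟩ y hy 0 mem0).1
  -- step 1 : y ⊕_p V ≤ sInf S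
  have step1 : A.op p y (A.V 0 y) ≤ sInf S := by
    apply le_csInf hSne
    rintro z ⟨q, hq, rfl⟩
    have hc : (q - p) / (1 - p) ∈ Set.Ioo (0:ℝ) 1 := by
      constructor
      · apply div_pos (by linarith [hq.1]) (by linarith [hp.2])
      · rw [div_lt_one (by linarith [hp.2])]; linarith [hq.2]
    have hgc : A.op ((q - p) / (1 - p)) y 0 ∈ Set.Icc (0:ℝ) 1 :=
      A.mem _ ⟨le_of_lt hc.1, le_of_lt hc.2⟩ y hy 0 mem0
    have h1 : A.V 0 y ≤ A.op ((q - p) / (1 - p)) y 0 := V_le A hy ⟨hc.1, le_of_lt hc.2⟩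
    have h2 : A.op p y (A.V 0 y) ≤ A.op p y (A.op ((q - p) / (1 - p)) y 0) :=
      mono2 A hMO hp hy hv hgc h1
    rw [merge A hy hp hc] at h2
    have he : p + (q - p) / (1 - p) * (1 - p) = q := by
      rw [div_mul_cancel₀ _ (show (1:ℝ) - p ≠ 0 by linarith [hp.2])]; ring
    rwa [he] at h2
  -- monotone clamp extension
  set G : ℝ → ℝ := fun t => A.op (max p (min t 1)) y 0 with hG
  have hclamp : ∀ t : ℝ, 0 < max p (min t 1) ∧ max p (min t 1) ≤ 1 := by
    intro t
    exact ⟨lt_of_lt_of_le hp.1 (le_max_left _ _), max_le (le_of_lt hp.2) (min_le_right _ _)⟩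
  have hGmono : Monotone G := by
    intro t t' htt'
    exact gMono A hMO hy (hclamp t).1
      (max_le_max (le_refl p) (min_le_min htt' (le_refl 1))) (hclamp t').2
  have hGeq : ∀ q ∈ Set.Ioo p 1, G q = A.op q y 0 := by
    intro q hq
    have : max p (min q 1) = q := by
      rw [min_eq_left (le_of_lt hq.2), max_eq_right (le_of_lt hq.1)]
    rw [hG]; simp only []; rw [this]
  -- a continuity point of G in (p,1)
  obtain ⟨q₀, hq₀, hq₀c⟩ : ∃ q₀ ∈ Set.Ioo p 1, ContinuousAt G q₀ := by
    by_contra hcon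
    push_neg at hcon
    have hsub : Set.Ioo p 1 ⊆ {t | ¬ContinuousAt G t} := fun t ht => hcon t ht
    have hc2 : (Set.Ioo p 1).Countable := hGmono.countable_not_continuousAt.mono hsub
    have h0 := hc2.measure_zero (MeasureTheory.volume)
    rw [Real.volume_Ioo] at h0
    rw [ENNReal.ofReal_eq_zero] at h0
    linarith [hp.2]
  have hq₀m : q₀ ∈ Set.Ioo (0:ℝ) 1 := ⟨hp.1.trans hq₀.1, hq₀.2⟩
  have ht : p / q₀ ∈ Set.Ioo (0:ℝ) 1 := ⟨div_pos hp.1 hq₀m.1, (div_lt_one hq₀m.1).2 hq₀.1⟩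
  have hgp : A.op (p / q₀) (A.op q₀ y 0) 0 = A.op p y 0 := by
    have h := scale A hy hq₀m ht
    have he : q₀ * (p / q₀) = p := by
      rw [mul_comm, div_mul_cancel₀ _ (ne_of_gt hq₀m.1)]
    rwa [he] at h
  have hgq₀mem : A.op q₀ y 0 ∈ Set.Icc (0:ℝ) 1 :=
    A.mem q₀ ⟨le_of_lt hq₀m.1, le_of_lt hq₀m.2⟩ y hy 0 mem0
  -- step 2 : sInf S ≤ y ⊕_p 0
  have step2 : sInf S ≤ A.op p y 0 := by
    by_cases hy1 : A.op q₀ y 0 = 1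
    · -- trivial case
      have h1 : A.op p y 0 = A.op (p / q₀) 1 0 := by rw [← hgp, hy1]
      have h2 : A.op (p / q₀) y 0 ≤ A.op (p / q₀) 1 0 :=
        hMO y hy 1 mem1 0 mem0 _ ht hy.2
      have hmem' : p / q₀ ∈ Set.Ioo p 1 := by
        constructor
        · rw [lt_div_iff₀ hq₀m.1]; nlinarith [hp.1, hq₀m.2]
        · exact ht.2
      have h3 : sInf S ≤ A.op (p / q₀) y 0 := csInf_le hSbdd ⟨p / q₀, hmem', rfl⟩
      rw [h1]; exact h3.trans h2
    · set y' := A.op q₀ y 0 with hy'def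
      have hy'1 : y' < 1 := lt_of_le_of_ne hgq₀mem.2 hy1
      have hUCb := hUC y' ⟨hgq₀mem.1, hy'1⟩ 0 ⟨le_refl 0, zero_lt_one⟩ (p / q₀) ht
      have hty' : A.op (p / q₀) y' 0 = A.op p y 0 := hgp
      have hGq₀ : G q₀ = y' := hGeq q₀ hq₀
      -- eventual lower bound
      have hev : ∀ᶠ ε in 𝓝[>] (0:ℝ),
          sInf S ≤ A.op (p / q₀) (y' + ε) (0 + ε) ∧ A.op (p / q₀) (y' + ε) (0 + ε) ≤ 1 := by
        have hmem : Set.Ioo (0:ℝ) (1 - y') ∈ 𝓝[>] (0:ℝ) :=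
          Ioo_mem_nhdsGT_of_mem ⟨le_refl 0, by linarith⟩
        filter_upwards [hmem] with ε hε
        have hy'ε : y' + ε ∈ Set.Icc (0:ℝ) 1 :=
          ⟨by linarith [hgq₀mem.1, hε.1], by linarith [hε.2]⟩
        have h0ε : (0:ℝ) + ε ∈ Set.Icc (0:ℝ) 1 := by
          constructor <;> [linarith [hε.1]; linarith [hε.2, hgq₀mem.1]]
        have hub : A.op (p / q₀) (y' + ε) (0 + ε) ≤ 1 :=
          (A.mem _ ⟨le_of_lt ht.1, le_of_lt ht.2⟩ _ hy'ε _ h0ε).2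
        -- find q₁
        have h1 : ∀ᶠ s in 𝓝 q₀, G s < G q₀ + ε :=
          hq₀c.eventually_lt_const (lt_add_of_pos_right _ hε.1)
        have h2 : ∀ᶠ s in 𝓝[>] q₀, G s < G q₀ + ε := h1.filter_mono nhdsWithin_le_nhds
        have h3 : ∀ᶠ s in 𝓝[>] q₀, s < 1 :=
          (eventually_lt_nhds hq₀.2).filter_mono nhdsWithin_le_nhds
        have h4 : ∀ᶠ s in 𝓝[>] q₀, q₀ < s := eventually_mem_nhdsWithin
        obtain ⟨q₁, hq₁lt, hq₁1, hq₁G⟩ := (h4.and (h3.and h2)).exists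
        have hq₁mem : q₁ ∈ Set.Ioo p 1 := ⟨hq₀.1.trans hq₁lt, hq₁1⟩
        have hq₁m : q₁ ∈ Set.Ioo (0:ℝ) 1 := ⟨hp.1.trans hq₁mem.1, hq₁1⟩
        rw [hGeq q₁ hq₁mem, hGq₀] at hq₁G
        have hgq₁mem : A.op q₁ y 0 ∈ Set.Icc (0:ℝ) 1 :=
          A.mem q₁ ⟨le_of_lt hq₁m.1, le_of_lt hq₁m.2⟩ y hy 0 mem0
        -- chain
        have c1 : A.op (p / q₀) (A.op q₁ y 0) (0 + ε) ≤ A.op (p / q₀) (y' + ε) (0 + ε) :=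
          hMO _ hgq₁mem _ hy'ε _ h0ε _ ht (le_of_lt hq₁G)
        have c2 : A.op (p / q₀) (A.op q₁ y 0) 0 ≤ A.op (p / q₀) (A.op q₁ y 0) (0 + ε) :=
          mono2 A hMO ht hgq₁mem mem0 h0ε (by linarith [hε.1])
        have c3 : A.op (p / q₀) (A.op q₁ y 0) 0 = A.op (q₁ * (p / q₀)) y 0 :=
          scale A hy hq₁m ht
        have hq₁t : q₁ * (p / q₀) ∈ Set.Ioo p 1 := by
          have he : q₀ * (p / q₀) = p := by
            rw [mul_comm q₀, div_mul_cancel₀ _ (ne_of_gt hq₀m.1)]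
          have h5 : q₀ * (p / q₀) < q₁ * (p / q₀) :=
            mul_lt_mul_of_pos_right hq₁lt ht.1
          rw [he] at h5
          exact ⟨h5, by nlinarith [ht.1, ht.2, hq₁m.1, hq₁m.2]⟩
        have c4 : sInf S ≤ A.op (q₁ * (p / q₀)) y 0 := csInf_le hSbdd ⟨_, hq₁t, rfl⟩
        constructor
        · rw [c3] at c2
          linarith
        · exact hub
      -- limsup manipulation
      have hfreq : ∃ᶠ ε in 𝓝[>] (0:ℝ), sInf S ≤ A.op (p / q₀) (y' + ε) (0 + ε) :=
        (hev.mono fun ε h => h.1).frequently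
      have hbdd : IsBoundedUnder (· ≤ ·) (𝓝[>] (0:ℝ))
          (fun ε => A.op (p / q₀) (y' + ε) (0 + ε)) :=
        ⟨1, eventually_map.mpr (hev.mono fun ε h => h.2)⟩
      have hfin := (le_limsup_of_frequently_le hfreq hbdd).trans hUCb
      rwa [hty'] at hfin
  -- conclusion
  have last : A.op p y 0 ≤ A.op p y (A.V 0 y) :=
    mono2 A hMO hp hy mem0 hv (V_nonneg A hy)
  exact le_antisymm (step1.trans step2) last

/-- replacement lemma: `y ⊕_p (x ∨ v) = y ⊕_p x` whenever `0 ≤ v ≤ V_{0,y}` -/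
lemma binMax (hMO : A.MO) (hUC : A.UC) {y p x v : ℝ} (hy : y ∈ Set.Icc (0:ℝ) 1)
    (hp : p ∈ Set.Ioo (0:ℝ) 1) (hx : x ∈ Set.Icc (0:ℝ) 1)
    (hv0 : 0 ≤ v) (hvV : v ≤ A.V 0 y) :
    A.op p y (max x v) = A.op p y x := by
  have hVm : A.V 0 y ∈ Set.Icc (0:ℝ) 1 := V_mem A hy
  have hv1 : v ≤ 1 := hvV.trans hVm.2
  have hmaxm : max x v ∈ Set.Icc (0:ℝ) 1 :=
    ⟨le_trans hx.1 (le_max_left _ _), max_le hx.2 hv1⟩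
  have hmaxVm : max x (A.V 0 y) ∈ Set.Icc (0:ℝ) 1 :=
    ⟨le_trans hx.1 (le_max_left _ _), max_le hx.2 hVm.2⟩
  have h1 : A.op p y x ≤ A.op p y (max x v) :=
    mono2 A hMO hp hy hx hmaxm (le_max_left _ _)
  have h2 : A.op p y (max x v) ≤ A.op p y (max x (A.V 0 y)) :=
    mono2 A hMO hp hy hmaxm hmaxVm (max_le_max (le_refl x) hvV)
  have h3 : A.op p y (max x (A.V 0 y)) ≤ A.op p y x := by
    rcases le_total (A.V 0 y) x with h | h
    · rw [max_eq_left h]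
    · rw [max_eq_right h]
      calc A.op p y (A.V 0 y) = A.op p y 0 := binV A hMO hUC hy hp
        _ ≤ A.op p y x := mono2 A hMO hp hy mem0 hx hx.1
  linarith

/-- `V_{0,z} ≤ V_{0, z ⊕_s z'}` -/
lemma Vmix_left (hMO : A.MO) {s z z' : ℝ} (hs : s ∈ Set.Ioo (0:ℝ) 1)
    (hz : z ∈ Set.Icc (0:ℝ) 1) (hz' : z' ∈ Set.Icc (0:ℝ) 1) :
    A.V 0 z ≤ A.V 0 (A.op s z z') := by
  have hM : A.op s z z' ∈ Set.Icc (0:ℝ) 1 :=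
    A.mem s ⟨le_of_lt hs.1, le_of_lt hs.2⟩ z hz z' hz'
  apply le_csInf (Vset_ne A)
  rintro b ⟨t, ht, rfl⟩
  show A.V 0 z ≤ A.op t (A.op s z z') 0
  have h1 : A.op s z 0 ≤ A.op s z z' := mono2 A hMO hs hz mem0 hz' hz'.1
  have h0 : A.V 0 z ≤ A.op s z 0 := V_le A hz ⟨hs.1, le_of_lt hs.2⟩
  rcases eq_or_lt_of_le ht.2 with h1' | h1'
  · rw [h1', A.proj1 _ hM 0 mem0]
    exact h0.trans h1
  · have htm : t ∈ Set.Ioo (0:ℝ) 1 := ⟨ht.1, h1'⟩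
    have e : A.op t (A.op s z 0) 0 = A.op (s * t) z 0 := scale A hz hs htm
    have h2 : A.op t (A.op s z 0) 0 ≤ A.op t (A.op s z z') 0 :=
      hMO _ (A.mem s ⟨le_of_lt hs.1, le_of_lt hs.2⟩ z hz 0 mem0) _ hM 0 mem0 t htm h1
    have h3 : A.V 0 z ≤ A.op (s * t) z 0 := by
      apply V_le A hz
      constructor
      · exact mul_pos hs.1 ht.1
      · nlinarith [hs.2, ht.1, ht.2]
    rw [e] at h2
    exact h3.trans h2

lemma Vmix_right (hMO : A.MO) {s z z' : ℝ} (hs : s ∈ Set.Ioo (0:ℝ) 1)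
    (hz : z ∈ Set.Icc (0:ℝ) 1) (hz' : z' ∈ Set.Icc (0:ℝ) 1) :
    A.V 0 z' ≤ A.V 0 (A.op s z z') := by
  rw [A.comm s hs z hz z' hz']
  exact Vmix_left A hMO ⟨by linarith [hs.2], by linarith [hs.1]⟩ hz' hz

/-- reassociation: `a ⊕_s (b ⊕_w c) = (a ⊕_{s/K} b) ⊕_K c`, `K = s + w - s w` -/
lemma reassoc (hs : s ∈ Set.Ioo (0:ℝ) 1) (hw : w ∈ Set.Ioo (0:ℝ) 1)
    (ha : a ∈ Set.Icc (0:ℝ) 1) (hb : b ∈ Set.Icc (0:ℝ) 1) (hc : c ∈ Set.Icc (0:ℝ) 1) :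
    A.op s a (A.op w b c)
      = A.op (s + w - s * w) (A.op (s / (s + w - s * w)) a b) c := by
  have hK : s + w - s * w ∈ Set.Ioo (0:ℝ) 1 :=
    ⟨by nlinarith [hs.1, hw.1, hs.2, hw.2], by nlinarith [hs.2, hw.2]⟩
  have hKne : s + w - s * w ≠ 0 := ne_of_gt hK.1
  have hπ : s / (s + w - s * w) ∈ Set.Ioo (0:ℝ) 1 :=
    ⟨div_pos hs.1 hK.1, (div_lt_one hK.1).2 (by nlinarith [hw.1, hs.2])⟩
  have h := A.assoc _ hπ _ hK a ha b hb c hc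
  have e1 : s / (s + w - s * w) * (s + w - s * w) = s := div_mul_cancel₀ _ hKne
  rw [e1] at h
  have e2 : (1 - s / (s + w - s * w)) * (s + w - s * w) / (1 - s) = w := by
    have h1s : (1:ℝ) - s ≠ 0 := by linarith [hs.2]
    field_simp
    ring
  rw [e2] at h
  exact h.symm

lemma sumNonneg {l : List (ℝ × ℝ)} (h : ∀ e ∈ l, 0 < e.1 ∧ e.2 ∈ Set.Icc (0:ℝ) 1) :
    0 ≤ (l.map Prod.fst).sum := by
  apply List.sum_nonneg
  intro a ha
  obtain ⟨e, he, rfl⟩ := List.mem_map.1 ha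
  exact le_of_lt (h e he).1

lemma sumPos {l : List (ℝ × ℝ)} (h : ∀ e ∈ l, 0 < e.1 ∧ e.2 ∈ Set.Icc (0:ℝ) 1)
    (hne : l ≠ []) : 0 < (l.map Prod.fst).sum := by
  cases l with
  | nil => exact absurd rfl hne
  | cons e l' =>
    simp only [List.map_cons, List.sum_cons]
    have h1 : 0 < e.1 := (h e (List.mem_cons_self)).1
    have h2 : 0 ≤ (l'.map Prod.fst).sum :=
      sumNonneg (fun e' he' => h e' (List.mem_cons_of_mem e he'))
    linarith

lemma mixList_cons (q x : ℝ) (l : List (ℝ × ℝ)) :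
    A.mixList ((q, x) :: l) = if q = q + (l.map Prod.fst).sum then x
      else A.op (q / (q + (l.map Prod.fst).sum)) x (A.mixList l) := rfl

lemma map_fst_max (v : ℝ) (l : List (ℝ × ℝ)) :
    ((l.map fun e => (e.1, max e.2 v)).map Prod.fst) = l.map Prod.fst := by
  rw [List.map_map]
  rfl

lemma mixList_mem : ∀ (l : List (ℝ × ℝ)), (∀ e ∈ l, 0 < e.1 ∧ e.2 ∈ Set.Icc (0:ℝ) 1) →
    l ≠ [] → A.mixList l ∈ Set.Icc (0:ℝ) 1 := by
  intro l
  induction l with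
  | nil => intro _ h; exact absurd rfl h
  | cons e l' ih =>
    intro h _
    obtain ⟨q, x⟩ := e
    rw [mixList_cons]
    have hx : x ∈ Set.Icc (0:ℝ) 1 := (h (q,x) (List.mem_cons_self)).2
    have hq : 0 < q := (h (q,x) (List.mem_cons_self)).1
    have htail : ∀ e ∈ l', 0 < e.1 ∧ e.2 ∈ Set.Icc (0:ℝ) 1 :=
      fun e' he' => h e' (List.mem_cons_of_mem _ he')
    by_cases hS : (l'.map Prod.fst).sum = 0
    · rw [if_pos (by rw [hS, add_zero])]
      exact hx
    · rw [if_neg (by rw [left_eq_add]; exact hS)]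
      have hl' : l' ≠ [] := by rintro rfl; simp at hS
      have hSpos : 0 < (l'.map Prod.fst).sum := sumPos htail hl'
      have hw : q / (q + (l'.map Prod.fst).sum) ∈ Set.Ioo (0:ℝ) 1 :=
        ⟨div_pos hq (by linarith), (div_lt_one (by linarith)).2 (by linarith)⟩
      exact A.mem _ ⟨le_of_lt hw.1, le_of_lt hw.2⟩ x hx _ (ih htail hl')

lemma VvGe (hMO : A.MO) (v : ℝ) :
    ∀ (l : List (ℝ × ℝ)), (∀ e ∈ l, 0 < e.1 ∧ e.2 ∈ Set.Icc (0:ℝ) 1) →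
    (∃ e ∈ l, v ≤ A.V 0 e.2) → v ≤ A.V 0 (A.mixList l) := by
  intro l
  induction l with
  | nil => rintro _ ⟨e, he, -⟩; simp at he
  | cons e l' ih =>
    rintro h ⟨e₀, he₀l, he₀⟩
    obtain ⟨q, x⟩ := e
    have hx : x ∈ Set.Icc (0:ℝ) 1 := (h (q,x) (List.mem_cons_self)).2
    have hq : 0 < q := (h (q,x) (List.mem_cons_self)).1
    have htail : ∀ e ∈ l', 0 < e.1 ∧ e.2 ∈ Set.Icc (0:ℝ) 1 :=
      fun e' he' => h e' (List.mem_cons_of_mem _ he')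
    rw [mixList_cons]
    by_cases hS : (l'.map Prod.fst).sum = 0
    · rw [if_pos (by rw [hS, add_zero])]
      have hl' : l' = [] := by
        by_contra hne; exact absurd hS (ne_of_gt (sumPos htail hne))
      subst hl'
      have he' : e₀ = (q, x) := by simpa using he₀l
      rw [he'] at he₀
      exact he₀
    · rw [if_neg (by rw [left_eq_add]; exact hS)]
      have hl' : l' ≠ [] := by rintro rfl; simp at hS
      have hSpos : 0 < (l'.map Prod.fst).sum := sumPos htail hl'
      have hw : q / (q + (l'.map Prod.fst).sum) ∈ Set.Ioo (0:ℝ) 1 :=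
        ⟨div_pos hq (by linarith), (div_lt_one (by linarith)).2 (by linarith)⟩
      have hM : A.mixList l' ∈ Set.Icc (0:ℝ) 1 := mixList_mem A l' htail hl'
      rcases List.mem_cons.1 he₀l with h' | h'
      · rw [h'] at he₀
        exact he₀.trans (Vmix_left A hMO hw hx hM)
      · exact (ih htail ⟨e₀, h', he₀⟩).trans (Vmix_right A hMO hw hx hM)

lemma mixA (hMO : A.MO) (hUC : A.UC) (v : ℝ) (hv0 : 0 ≤ v) :
    ∀ (l : List (ℝ × ℝ)), (∀ e ∈ l, 0 < e.1 ∧ e.2 ∈ Set.Icc (0:ℝ) 1) →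
    ∀ y' ∈ Set.Icc (0:ℝ) 1, v ≤ A.V 0 y' → ∀ s ∈ Set.Ioo (0:ℝ) 1,
    A.op s y' (A.mixList (l.map fun e => (e.1, max e.2 v)))
      = A.op s y' (A.mixList l) := by
  intro l
  induction l with
  | nil => intro _ y' _ _ s _; rfl
  | cons e l' ih =>
    intro h y' hy' hvy' s hs
    obtain ⟨q, x⟩ := e
    have hx : x ∈ Set.Icc (0:ℝ) 1 := (h (q,x) (List.mem_cons_self)).2
    have hq : 0 < q := (h (q,x) (List.mem_cons_self)).1
    have htail : ∀ e ∈ l', 0 < e.1 ∧ e.2 ∈ Set.Icc (0:ℝ) 1 :=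
      fun e' he' => h e' (List.mem_cons_of_mem _ he')
    have hv1 : v ≤ 1 := hvy'.trans (V_mem A hy').2
    have hmax : max x v ∈ Set.Icc (0:ℝ) 1 :=
      ⟨hx.1.trans (le_max_left _ _), max_le hx.2 hv1⟩
    rw [List.map_cons, mixList_cons, mixList_cons, map_fst_max]
    by_cases hS : (l'.map Prod.fst).sum = 0
    · rw [if_pos (by rw [hS, add_zero]), if_pos (by rw [hS, add_zero])]
      exact binMax A hMO hUC hy' hs hx hv0 hvy'
    · have hcond : ¬ (q = q + (l'.map Prod.fst).sum) := by
        rw [left_eq_add]; exact hS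
      rw [if_neg hcond, if_neg hcond]
      have hl' : l' ≠ [] := by rintro rfl; simp at hS
      have hSpos : 0 < (l'.map Prod.fst).sum := sumPos htail hl'
      have hw : q / (q + (l'.map Prod.fst).sum) ∈ Set.Ioo (0:ℝ) 1 :=
        ⟨div_pos hq (by linarith), (div_lt_one (by linarith)).2 (by linarith)⟩
      set w := q / (q + (l'.map Prod.fst).sum) with hwdef
      have hM : A.mixList l' ∈ Set.Icc (0:ℝ) 1 := mixList_mem A l' htail hl'
      have htail' : ∀ e ∈ (l'.map fun e => (e.1, max e.2 v)),
          0 < e.1 ∧ e.2 ∈ Set.Icc (0:ℝ) 1 := by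
        intro e' he'
        obtain ⟨e'', he'', rfl⟩ := List.mem_map.1 he'
        exact ⟨(htail e'' he'').1,
          ⟨le_trans (htail e'' he'').2.1 (le_max_left _ _),
            max_le (htail e'' he'').2.2 hv1⟩⟩
      have hl'' : (l'.map fun e => (e.1, max e.2 v)) ≠ [] := by
        intro hmape
        exact hl' (List.map_eq_nil_iff.1 hmape)
      have hM₁ : A.mixList (l'.map fun e => (e.1, max e.2 v)) ∈ Set.Icc (0:ℝ) 1 :=
        mixList_mem A _ htail' hl''
      have hK : s + w - s * w ∈ Set.Ioo (0:ℝ) 1 :=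
        ⟨by nlinarith [hs.1, hw.1, hs.2, hw.2], by nlinarith [hs.2, hw.2]⟩
      have hπ : s / (s + w - s * w) ∈ Set.Ioo (0:ℝ) 1 :=
        ⟨div_pos hs.1 hK.1, (div_lt_one hK.1).2 (by nlinarith [hw.1, hs.2])⟩
      have h1 := reassoc A hs hw hy' hmax hM₁
      have h2 := reassoc A hs hw hy' hx hM
      have hbin : A.op (s / (s + w - s * w)) y' (max x v)
          = A.op (s / (s + w - s * w)) y' x := binMax A hMO hUC hy' hπ hx hv0 hvy'
      have hY : A.op (s / (s + w - s * w)) y' x ∈ Set.Icc (0:ℝ) 1 :=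
        A.mem _ ⟨le_of_lt hπ.1, le_of_lt hπ.2⟩ y' hy' x hx
      have hIH := ih htail _ hY (hvy'.trans (Vmix_left A hMO hπ hy' hx)) _ hK
      rw [h1, hbin, hIH, ← h2]

lemma mixL (hMO : A.MO) (hUC : A.UC) (v : ℝ) (hv0 : 0 ≤ v) :
    ∀ (l : List (ℝ × ℝ)), (∀ e ∈ l, 0 < e.1 ∧ e.2 ∈ Set.Icc (0:ℝ) 1) →
    (∃ e ∈ l, v ≤ A.V 0 e.2) →
    A.mixList (l.map fun e => (e.1, max e.2 v)) = A.mixList l := by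
  intro l
  induction l with
  | nil => intro _ _; rfl
  | cons e l' ih =>
    rintro h ⟨e₀, he₀l, he₀⟩
    obtain ⟨q, x⟩ := e
    have hx : x ∈ Set.Icc (0:ℝ) 1 := (h (q,x) (List.mem_cons_self)).2
    have hq : 0 < q := (h (q,x) (List.mem_cons_self)).1
    have htail : ∀ e ∈ l', 0 < e.1 ∧ e.2 ∈ Set.Icc (0:ℝ) 1 :=
      fun e' he' => h e' (List.mem_cons_of_mem _ he')
    have hv1 : v ≤ 1 := he₀.trans (V_mem A (h e₀ he₀l).2).2
    have hmax : max x v ∈ Set.Icc (0:ℝ) 1 :=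
      ⟨hx.1.trans (le_max_left _ _), max_le hx.2 hv1⟩
    rw [List.map_cons, mixList_cons, mixList_cons, map_fst_max]
    by_cases hS : (l'.map Prod.fst).sum = 0
    · rw [if_pos (by rw [hS, add_zero]), if_pos (by rw [hS, add_zero])]
      have hl' : l' = [] := by
        by_contra hne; exact absurd hS (ne_of_gt (sumPos htail hne))
      subst hl'
      have he' : e₀ = (q, x) := by simpa using he₀l
      rw [he'] at he₀
      exact max_eq_left (he₀.trans (V_le_self A hx))
    · have hcond : ¬ (q = q + (l'.map Prod.fst).sum) := by
        rw [left_eq_add]; exact hS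
      rw [if_neg hcond, if_neg hcond]
      have hl' : l' ≠ [] := by rintro rfl; simp at hS
      have hSpos : 0 < (l'.map Prod.fst).sum := sumPos htail hl'
      have hw : q / (q + (l'.map Prod.fst).sum) ∈ Set.Ioo (0:ℝ) 1 :=
        ⟨div_pos hq (by linarith), (div_lt_one (by linarith)).2 (by linarith)⟩
      have hM : A.mixList l' ∈ Set.Icc (0:ℝ) 1 := mixList_mem A l' htail hl'
      by_cases hvx : v ≤ A.V 0 x
      · have hmx : max x v = x := max_eq_left (hvx.trans (V_le_self A hx))
        rw [hmx]
        exact mixA A hMO hUC v hv0 l' htail x hx hvx _ hw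
      · have hex' : ∃ e ∈ l', v ≤ A.V 0 e.2 := by
          rcases List.mem_cons.1 he₀l with h' | h'
          · exfalso; apply hvx; rw [h'] at he₀; exact he₀
          · exact ⟨e₀, h', he₀⟩
        rw [ih htail hex']
        have hVM : v ≤ A.V 0 (A.mixList l') := VvGe A hMO v l' htail hex'
        have hw' : 1 - q / (q + (l'.map Prod.fst).sum) ∈ Set.Ioo (0:ℝ) 1 :=
          ⟨by linarith [hw.2], by linarith [hw.1]⟩
        rw [A.comm _ hw _ hmax _ hM, A.comm _ hw x hx _ hM]
        exact binMax A hMO hUC hM hw' hx hv0 hVM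

end UCAhelp

/-- Corollary 3.4: let `⟨[0,1], ⊕_p⟩` be a convex algebra satisfying (MO) and (UC),
`A` a nonempty set, `(x_a) ∈ [0,1]^A`, `(p_a)` a finitely supported family of
nonnegative reals with `Σ p_a = 1`, and `a₀` with `p_{a₀} > 0`.  Then
`⊕_{a} p_a x_a = ⊕_{a} p_a (max {x_a, V_{0,x_{a₀}}})`. -/
theorem stmt_14 {α : Type*} [Nonempty α] (A : UCA) (hMO : A.MO) (hUC : A.UC)
    (p : α → ℝ) (x : α → ℝ) (hx : ∀ a, x a ∈ Set.Icc (0:ℝ) 1)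
    (hp : ∀ a, 0 ≤ p a) (hfin : (Function.support p).Finite)
    (hsum : ∑ᶠ a, p a = 1) (a₀ : α) (ha₀ : 0 < p a₀) :
    A.mixFam p x = A.mixFam p (fun a => max (x a) (A.V 0 (x a₀))) := by
  classical
  unfold UCA.mixFam
  rw [dif_pos hfin, dif_pos hfin]
  set v := A.V 0 (x a₀) with hvdef
  have hv0 : 0 ≤ v := UCAhelp.V_nonneg A (hx a₀)
  have hmap : (hfin.toFinset.toList.map fun a => (p a, max (x a) v))
      = ((hfin.toFinset.toList.map fun a => (p a, x a)).map fun e => (e.1, max e.2 v)) := by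
    rw [List.map_map]
    rfl
  rw [hmap]
  have hPL : ∀ e ∈ (hfin.toFinset.toList.map fun a => (p a, x a)),
      0 < e.1 ∧ e.2 ∈ Set.Icc (0:ℝ) 1 := by
    intro e he
    obtain ⟨a, ha, rfl⟩ := List.mem_map.1 he
    have hane : p a ≠ 0 := by
      have := (Finset.mem_toList.1 ha)
      rwa [Set.Finite.mem_toFinset, Function.mem_support] at this
    exact ⟨lt_of_le_of_ne (hp a) (Ne.symm hane), hx a⟩
  have hanchor : ∃ e ∈ (hfin.toFinset.toList.map fun a => (p a, x a)), v ≤ A.V 0 e.2 := by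
    refine ⟨(p a₀, x a₀), ?_, le_refl _⟩
    apply List.mem_map.2
    refine ⟨a₀, ?_, rfl⟩
    rw [Finset.mem_toList, Set.Finite.mem_toFinset, Function.mem_support]
    exact ne_of_gt ha₀
  exact (UCAhelp.mixL A hMO hUC v hv0 _ hPL hanchor).symm
end

section
/- Let ⟨[0,1], ⊕_p⟩ be a convex algebra satisfying (MO), (UC) and (LC), and assume that max E^⊕ < 1 (the maximum exists since E^⊕ is closed, nonempty, and contains 0). Then the interval [max E^⊕, 1] is closed under the operations ⊕_p and the algebra ⟨[max E^⊕, 1], ⊕_p⟩ is isomorphic to ⟨[0,1], +_p⟩, where x +_p y = px + (1−p)y. Moreover, there exist exactly two isomorphisms Φ : [0,1] → [max E^⊕, 1] (i.e. bijections with Φ(s +_p t) = Φ(s) ⊕_p Φ(t) for all s, t ∈ [0,1] and p ∈ (0,1)), one of which is strictly increasing and one strictly decreasing. -/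
open Set Filter Topology

/-- `Φ` is an isomorphism of `⟨[0,1], +_p⟩` (operations induced by linear combinations)
onto `⟨[max E^⊕, 1], ⊕_p⟩`, where `m = max E^⊕`: a bijection of `[0,1]` onto `[m,1]`
with `Φ(s +_p t) = Φ(s) ⊕_p Φ(t)`. -/
def UCA.IsStdIso (A : UCA) (m : ℝ) (Φ : ℝ → ℝ) : Prop :=
  Set.BijOn Φ (Set.Icc (0:ℝ) 1) (Set.Icc m 1) ∧
  ∀ p ∈ Set.Ioo (0:ℝ) 1, ∀ s ∈ Set.Icc (0:ℝ) 1, ∀ t ∈ Set.Icc (0:ℝ) 1,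
    Φ (p * s + (1 - p) * t) = A.op p (Φ s) (Φ t)

namespace UCA
variable (A : UCA)

lemma one_mem : (1:ℝ) ∈ Set.Icc (0:ℝ) 1 := ⟨zero_le_one, le_refl 1⟩
lemma zero_mem : (0:ℝ) ∈ Set.Icc (0:ℝ) 1 := ⟨le_refl 0, zero_le_one⟩

/-- dual law : (x ⊕_p y) ⊕_r y = x ⊕_{pr} y -/
lemma dual (hp : p ∈ Set.Ioo (0:ℝ) 1) (hr : r ∈ Set.Ioo (0:ℝ) 1)
    (hx : x ∈ Set.Icc (0:ℝ) 1) (hy : y ∈ Set.Icc (0:ℝ) 1) :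
    A.op r (A.op p x y) y = A.op (p*r) x y := by
  have h := A.assoc p hp r hr x hx y hy y hy
  rw [h, A.idem _ ?_ y hy]
  constructor
  · have h1 : 0 < (1-p)*r := by nlinarith [hp.1, hp.2, hr.1, hr.2]
    have h2 : 0 < 1 - p*r := by nlinarith [hp.1, hp.2, hr.1, hr.2]
    positivity
  · rw [div_lt_one (by nlinarith [hp.1, hp.2, hr.1, hr.2])]
    nlinarith [hp.1, hp.2, hr.1, hr.2]

/-- L1 : x ⊕_p (x ⊕_q b) = x ⊕_{p+q-pq} b -/
lemma lem1 (hp : p ∈ Set.Ioo (0:ℝ) 1) (hq : q ∈ Set.Ioo (0:ℝ) 1)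
    (hx : x ∈ Set.Icc (0:ℝ) 1) (hb : b ∈ Set.Icc (0:ℝ) 1) :
    A.op p x (A.op q x b) = A.op (p+q-p*q) x b := by
  obtain ⟨hp0, hp1⟩ := hp; obtain ⟨hq0, hq1⟩ := hq
  set Q : ℝ := p + q - p*q with hQ
  have hQ0 : 0 < Q := by nlinarith
  have hQ1 : Q < 1 := by nlinarith
  have hPQ : p / Q ∈ Set.Ioo (0:ℝ) 1 := by
    constructor
    · positivity
    · rw [div_lt_one hQ0]; nlinarith
  have h := A.assoc (p/Q) hPQ Q ⟨hQ0, hQ1⟩ x hx x hx b hb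
  rw [A.idem _ hPQ x hx] at h
  have e1 : p / Q * Q = p := by field_simp
  rw [e1] at h
  have e2 : (1 - p/Q) * Q / (1 - p) = q := by
    have : (1 - p/Q) * Q = q * (1-p) := by field_simp; ring
    rw [this]
    have h1p : (1:ℝ) - p ≠ 0 := by linarith
    field_simp
  rw [e2] at h
  exact h.symm

lemma icc_cases {s : ℝ} (hs : s ∈ Set.Icc (0:ℝ) 1) :
    s = 0 ∨ s = 1 ∨ s ∈ Set.Ioo (0:ℝ) 1 := by
  rcases eq_or_lt_of_le hs.1 with h|h
  · exact Or.inl h.symm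
  rcases eq_or_lt_of_le hs.2 with h'|h'
  · exact Or.inr (Or.inl h')
  · exact Or.inr (Or.inr ⟨h, h'⟩)

/-- L2 : (x ⊕_s y) ⊕_p (x ⊕_t y) = x ⊕_{ps+(1-p)t} y -/
lemma lem2 (hp : p ∈ Set.Ioo (0:ℝ) 1) (hs : s ∈ Set.Icc (0:ℝ) 1)
    (ht : t ∈ Set.Icc (0:ℝ) 1) (hx : x ∈ Set.Icc (0:ℝ) 1) (hy : y ∈ Set.Icc (0:ℝ) 1) :
    A.op p (A.op s x y) (A.op t x y) = A.op (p*s+(1-p)*t) x y := by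
  obtain ⟨hp0, hp1⟩ := hp
  have hp' : p ∈ Set.Ioo (0:ℝ) 1 := ⟨hp0, hp1⟩
  have hp'' : (1-p) ∈ Set.Ioo (0:ℝ) 1 := ⟨by linarith, by linarith⟩
  rcases icc_cases hs with rfl|rfl|hs'
  · rw [A.proj0 x hx y hy]
    rcases icc_cases ht with rfl|rfl|ht'
    · rw [A.proj0 x hx y hy, A.idem p hp' y hy]
      norm_num
      exact (A.proj0 x hx y hy).symm
    · rw [A.proj1 x hx y hy, A.comm p hp' y hy x hx]
      norm_num
    · rw [A.comm p hp' y hy _ (A.mem t (Set.mem_Icc_of_Ioo ht') x hx y hy),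
        A.dual ht' hp'' hx hy]
      norm_num [mul_comm]
  · rw [A.proj1 x hx y hy]
    rcases icc_cases ht with rfl|rfl|ht'
    · rw [A.proj0 x hx y hy]
      norm_num
    · rw [A.proj1 x hx y hy, A.idem p hp' x hx]
      have : p * 1 + (1-p) * 1 = 1 := by ring
      rw [this, A.proj1 x hx y hy]
    · rw [A.lem1 hp' ht' hx hy]
      congr 1; ring
  · rcases icc_cases ht with rfl|rfl|ht'
    · rw [A.proj0 x hx y hy, A.dual hs' hp' hx hy]
      congr 1; ring
    · rw [A.proj1 x hx y hy,
        A.comm p hp' _ (A.mem s (Set.mem_Icc_of_Ioo hs') x hx y hy) x hx,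
        A.lem1 hp'' hs' hx hy]
      congr 1; ring
    · -- main case
      obtain ⟨hs0, hs1⟩ := hs'; obtain ⟨ht0, ht1⟩ := ht'
      have hsp : s*p ∈ Set.Ioo (0:ℝ) 1 := ⟨by positivity, by nlinarith⟩
      set v : ℝ := (1-s)*p/(1-s*p) with hv
      have hsp0 : (0:ℝ) < 1 - s*p := by nlinarith
      have hv' : v ∈ Set.Ioo (0:ℝ) 1 := by
        constructor
        · have : (0:ℝ) < (1-s)*p := by nlinarith
          positivity
        · rw [div_lt_one hsp0]; nlinarith
      have h1v : 1 - v = (1-p)/(1-s*p) := by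
        rw [hv, eq_div_iff (ne_of_gt hsp0), sub_mul, div_mul_cancel₀ _ (ne_of_gt hsp0)]
        ring
      have h1v' : (1-v) ∈ Set.Ioo (0:ℝ) 1 := ⟨by linarith [hv'.2], by linarith [hv'.1]⟩
      have hu : A.op t x y ∈ Set.Icc (0:ℝ) 1 :=
        A.mem t (Set.mem_Icc_of_Ioo ⟨ht0, ht1⟩) x hx y hy
      have h1 := A.assoc s ⟨hs0, hs1⟩ p hp' x hx y hy _ hu
      have h2 : A.op v y (A.op t x y) = A.op (t*(1-v)) x y := by
        rw [A.comm v hv' y hy _ hu, A.dual ⟨ht0, ht1⟩ h1v' hx hy]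
      rw [← hv] at h1
      rw [h1, h2, A.lem1 hsp ⟨by nlinarith [h1v'.1], by nlinarith [h1v'.2, ht1]⟩ hx hy]
      congr 1
      have : t*(1-v)*(1-s*p) = t*(1-p) := by
        rw [h1v]; field_simp; exact div_self (ne_of_gt (by linarith))
      nlinarith [this]

/-- monotonicity in the second argument -/
lemma mono2 (hMO : A.MO) (hx : x ∈ Set.Icc (0:ℝ) 1) (hy : y ∈ Set.Icc (0:ℝ) 1)
    (hy' : y' ∈ Set.Icc (0:ℝ) 1) (hp : p ∈ Set.Ioo (0:ℝ) 1) (h : y ≤ y') :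
    A.op p x y ≤ A.op p x y' := by
  have h1p : (1-p) ∈ Set.Ioo (0:ℝ) 1 := ⟨by linarith [hp.2], by linarith [hp.1]⟩
  rw [A.comm p hp x hx y hy, A.comm p hp x hx y' hy']
  exact hMO y hy y' hy' x hx (1-p) h1p h

lemma zero_mem_E : (0:ℝ) ∈ A.E := by
  refine ⟨zero_mem, fun t ht => ?_⟩
  rcases eq_or_lt_of_le ht.2 with h|h
  · rw [h]; exact A.proj1 0 (zero_mem) 0 (zero_mem)
  · exact A.idem t ⟨ht.1, h⟩ 0 (zero_mem)

lemma E_nonempty : A.E.Nonempty := ⟨0, A.zero_mem_E⟩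

lemma E_bddAbove : BddAbove A.E := bddAbove_Icc.mono (fun x hx => hx.1)

lemma m_nonneg : 0 ≤ sSup A.E := le_csSup A.E_bddAbove A.zero_mem_E

lemma m_le_one : sSup A.E ≤ 1 := csSup_le A.E_nonempty (fun x hx => hx.1.2)

lemma m_mem : sSup A.E ∈ Set.Icc (0:ℝ) 1 := ⟨A.m_nonneg, A.m_le_one⟩

lemma m_mem_E (hMO : A.MO) : sSup A.E ∈ A.E := by
  set m := sSup A.E with hm
  refine ⟨A.m_mem, fun t ht => ?_⟩
  rcases eq_or_lt_of_le ht.2 with h|h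
  · rw [h]; exact A.proj1 m A.m_mem 0 (zero_mem)
  have ht' : t ∈ Set.Ioo (0:ℝ) 1 := ⟨ht.1, h⟩
  have hle : A.op t m 0 ≤ m := by
    calc A.op t m 0 ≤ A.op t m m := A.mono2 hMO A.m_mem (zero_mem) A.m_mem ht' A.m_nonneg
    _ = m := A.idem t ht' m A.m_mem
  have hge : m ≤ A.op t m 0 := by
    apply csSup_le A.E_nonempty
    intro e he
    calc e = A.op t e 0 := (he.2 t ht).symm
    _ ≤ A.op t m 0 := hMO e he.1 m A.m_mem 0 (zero_mem) t ht' (le_csSup A.E_bddAbove he)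
  linarith

/-- composition : c ⊳ b and b ∈ E implies c ∈ E -/
lemma eats_trans (hc : c ∈ Set.Icc (0:ℝ) 1) (hcb : A.Eats c b) (hb : b ∈ A.E) :
    c ∈ A.E := by
  refine ⟨hc, fun t ht => ?_⟩
  rcases eq_or_lt_of_le ht.2 with h|h
  · rw [h]; exact A.proj1 c hc 0 (zero_mem)
  have ht' : t ∈ Set.Ioo (0:ℝ) 1 := ⟨ht.1, h⟩
  have h2 : (2:ℝ)⁻¹ ∈ Set.Ioo (0:ℝ) 1 := by norm_num
  have hcb2 : A.op 2⁻¹ c b = c := hcb 2⁻¹ (by norm_num)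
  have hu : (1 - 2⁻¹) * t / (1 - 2⁻¹ * t) ∈ Set.Ioc (0:ℝ) 1 := by
    constructor
    · apply div_pos (by linarith [ht'.1]) (by linarith [ht'.2])
    · rw [div_le_one (by linarith [ht'.2])]; linarith [ht'.1]
  calc A.op t c 0 = A.op t (A.op 2⁻¹ c b) 0 := by rw [hcb2]
  _ = A.op (2⁻¹*t) c (A.op ((1-2⁻¹)*t/(1-2⁻¹*t)) b 0) :=
      A.assoc 2⁻¹ h2 t ht' c hc b hb.1 0 (zero_mem)
  _ = A.op (2⁻¹*t) c b := by rw [hb.2 _ hu]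
  _ = c := hcb (2⁻¹*t) ⟨mul_pos (by norm_num) ht'.1, by nlinarith [ht'.2]⟩

/-- The candidate increasing isomorphism `s ↦ 1 ⊕_s m`. -/
noncomputable def phi1 : ℝ → ℝ := fun s => A.op s 1 (sSup A.E)

lemma phi1_zero : A.phi1 0 = sSup A.E := A.proj0 1 one_mem _ A.m_mem

lemma phi1_one : A.phi1 1 = 1 := A.proj1 1 one_mem _ A.m_mem

lemma phi1_mem01 (hs : s ∈ Set.Icc (0:ℝ) 1) : A.phi1 s ∈ Set.Icc (0:ℝ) 1 :=
  A.mem s hs 1 one_mem _ A.m_mem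

lemma phi1_ge_m (hMO : A.MO) (hs : s ∈ Set.Icc (0:ℝ) 1) : sSup A.E ≤ A.phi1 s := by
  rcases icc_cases hs with rfl|rfl|hs'
  · rw [A.phi1_zero]
  · rw [A.phi1_one]; exact A.m_le_one
  · calc sSup A.E = A.op s (sSup A.E) (sSup A.E) := (A.idem s hs' _ A.m_mem).symm
    _ ≤ A.op s 1 (sSup A.E) := hMO _ A.m_mem 1 one_mem _ A.m_mem s hs' A.m_le_one

lemma phi1_dual (hq : q ∈ Set.Ioc (0:ℝ) 1) (hr : r ∈ Set.Ioo (0:ℝ) 1) :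
    A.phi1 (q*r) = A.op r (A.phi1 q) (sSup A.E) := by
  rcases eq_or_lt_of_le hq.2 with h|h
  · subst h; rw [one_mul, phi1, phi1, A.proj1 1 one_mem _ A.m_mem]
  · exact (A.dual ⟨hq.1, h⟩ hr one_mem A.m_mem).symm

lemma phi1_mono (hMO : A.MO) : MonotoneOn A.phi1 (Set.Icc (0:ℝ) 1) := by
  intro a ha b hb hab
  rcases eq_or_lt_of_le hab with rfl|hab'
  · exact le_refl _
  rcases eq_or_lt_of_le ha.1 with h|h
  · rw [← h, A.phi1_zero]; exact A.phi1_ge_m hMO hb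
  have hb0 : 0 < b := lt_trans h hab'
  rcases eq_or_lt_of_le hb.2 with h1|h1
  · rw [h1, A.phi1_one]; exact (A.phi1_mem01 ha).2
  have hab2 : a/b ∈ Set.Ioo (0:ℝ) 1 := ⟨div_pos h hb0, (div_lt_one hb0).2 hab'⟩
  have : a = b * (a/b) := by field_simp
  rw [this, A.phi1_dual ⟨hb0, hb.2⟩ hab2]
  calc A.op (a/b) (A.phi1 b) (sSup A.E) ≤ A.op (a/b) (A.phi1 b) (A.phi1 b) :=
      A.mono2 hMO (A.phi1_mem01 hb) A.m_mem (A.phi1_mem01 hb) hab2 (A.phi1_ge_m hMO hb)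
  _ = A.phi1 b := A.idem _ hab2 _ (A.phi1_mem01 hb)

lemma closure (hMO : A.MO) (hp : p ∈ Set.Ioo (0:ℝ) 1)
    (hx : x ∈ Set.Icc (sSup A.E) 1) (hy : y ∈ Set.Icc (sSup A.E) 1) :
    A.op p x y ∈ Set.Icc (sSup A.E) 1 := by
  have hx' : x ∈ Set.Icc (0:ℝ) 1 := ⟨le_trans A.m_nonneg hx.1, hx.2⟩
  have hy' : y ∈ Set.Icc (0:ℝ) 1 := ⟨le_trans A.m_nonneg hy.1, hy.2⟩
  constructor
  · calc sSup A.E = A.op p (sSup A.E) (sSup A.E) := (A.idem p hp _ A.m_mem).symm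
    _ ≤ A.op p x (sSup A.E) := hMO _ A.m_mem x hx' _ A.m_mem p hp hx.1
    _ ≤ A.op p x y := A.mono2 hMO hx' A.m_mem hy' hp hy.1
  · exact (A.mem p (Set.mem_Icc_of_Ioo hp) x hx' y hy').2

lemma phi1_hom (hp : p ∈ Set.Ioo (0:ℝ) 1) (hs : s ∈ Set.Icc (0:ℝ) 1)
    (ht : t ∈ Set.Icc (0:ℝ) 1) :
    A.phi1 (p*s+(1-p)*t) = A.op p (A.phi1 s) (A.phi1 t) :=
  (A.lem2 hp hs ht one_mem A.m_mem).symm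

lemma phi1_injAux (hMO : A.MO) (hLC : A.LC) (hmax : sSup A.E < 1)
    (hq : q ∈ Set.Ioo (0:ℝ) 1) (hp : p ∈ Set.Ioo (0:ℝ) 1) (hqp : q < p)
    (heq : A.phi1 q = A.phi1 p) : False := by
  set m := sSup A.E with hm
  set c := A.phi1 p with hc
  have hk : q/p ∈ Set.Ioo (0:ℝ) 1 := ⟨div_pos hq.1 hp.1, (div_lt_one hp.1).2 hqp⟩
  have hpk : p * (q/p) = q := by
    rw [mul_comm, div_mul_cancel₀ q (ne_of_gt hp.1)]
  -- Step A
  have hA : ∀ n : ℕ, A.phi1 (p * (q/p)^n) = c := by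
    intro n
    induction n with
    | zero => simp; exact hc.symm
    | succ n ih =>
      have hmem : p * (q/p)^n ∈ Set.Ioo (0:ℝ) 1 := by
        constructor
        · exact mul_pos hp.1 (pow_pos hk.1 n)
        · have h1 : (q/p)^n ≤ 1 := pow_le_one₀ (le_of_lt hk.1) (le_of_lt hk.2)
          have h2 := mul_le_mul_of_nonneg_left h1 (le_of_lt hp.1)
          rw [mul_one] at h2
          linarith [hp.2]
      have e : p * (q/p)^(n+1) = (p * (q/p)^n) * (q/p) := by ring
      rw [e, A.phi1_dual ⟨hmem.1, le_of_lt hmem.2⟩ hk, ih, hc,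
        ← A.phi1_dual ⟨hp.1, le_of_lt hp.2⟩ hk, hpk, heq]
  -- Step B
  have hB : ∀ s, 0 < s → s ≤ p → A.phi1 s = c := by
    intro s hs0 hsp
    obtain ⟨n, hn⟩ := exists_pow_lt_of_lt_one (div_pos hs0 hp.1) hk.2
    have hlt : p * (q/p)^n < s := by
      have h2 : p * ((q/p)^n) < p * (s/p) := mul_lt_mul_of_pos_left hn hp.1
      have h3 : p * (s/p) = s := by rw [mul_comm, div_mul_cancel₀ s (ne_of_gt hp.1)]
      linarith
    have hmem : p * (q/p)^n ∈ Set.Icc (0:ℝ) 1 := by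
      constructor
      · exact le_of_lt (mul_pos hp.1 (pow_pos hk.1 n))
      · have h1 : (q/p)^n ≤ 1 := pow_le_one₀ (le_of_lt hk.1) (le_of_lt hk.2)
        have h2 := mul_le_mul_of_nonneg_left h1 (le_of_lt hp.1)
        rw [mul_one] at h2
        linarith [hp.2]
    have hsmem : s ∈ Set.Icc (0:ℝ) 1 := ⟨le_of_lt hs0, hsp.trans (le_of_lt hp.2)⟩
    have h1 : c ≤ A.phi1 s := by
      rw [← hA n]; exact A.phi1_mono hMO hmem hsmem (le_of_lt hlt)
    have h2 : A.phi1 s ≤ c := A.phi1_mono hMO hsmem (Set.mem_Icc_of_Ioo hp) hsp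
    linarith
  -- Step C
  have hcm : c = m := by
    have hceats : A.Eats c m := by
      intro t ht
      rcases eq_or_lt_of_le ht.2 with h|h
      · rw [h]; exact A.proj1 c (A.phi1_mem01 (Set.mem_Icc_of_Ioo hp)) m A.m_mem
      have ht' : t ∈ Set.Ioo (0:ℝ) 1 := ⟨ht.1, h⟩
      rw [hc, ← A.phi1_dual ⟨hp.1, le_of_lt hp.2⟩ ht']
      exact hB (p*t) (mul_pos hp.1 ht.1) (by nlinarith [hp.1, ht.2])
    have hcE : c ∈ A.E := A.eats_trans (A.phi1_mem01 (Set.mem_Icc_of_Ioo hp)) hceats (A.m_mem_E hMO)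
    have h1 : c ≤ m := le_csSup A.E_bddAbove hcE
    have h2 : m ≤ c := A.phi1_ge_m hMO (Set.mem_Icc_of_Ioo hp)
    linarith
  -- Step D
  set lam : ℝ := (1-q)/(1-p) with hlam
  have hlam1 : 1 < lam := by
    rw [hlam, lt_div_iff₀ (by linarith [hp.2])]; linarith
  have hD : ∀ n : ℕ, ∀ s, 0 < s → s < 1 → 1-p ≤ (1-s)*lam^n → A.phi1 s = m := by
    intro n
    induction n with
    | zero =>
      intro s hs0 hs1 hb
      simp only [pow_zero, mul_one] at hb
      rw [hB s hs0 (by linarith), hcm]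
    | succ n ih =>
      intro s hs0 hs1 hb
      by_cases hsp : s ≤ p
      · rw [hB s hs0 hsp, hcm]
      push_neg at hsp
      set r : ℝ := (s-p)/(1-p) with hr
      have hr' : r ∈ Set.Ioo (0:ℝ) 1 := by
        constructor
        · exact div_pos (by linarith) (by linarith [hp.2])
        · rw [div_lt_one (by linarith [hp.2])]; linarith
      have h1p : (1:ℝ)-p ≠ 0 := by linarith [hp.2]
      have hrp : r*(1-p) = s - p := by
        rw [hr, div_mul_cancel₀ _ h1p]
      have hrr : 1 - r = (1-s)/(1-p) := by
        rw [eq_div_iff h1p, sub_mul, one_mul, hrp]; ring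
      have e1 : A.phi1 s = A.op r 1 (A.phi1 p) := by
        have h := A.lem1 hr' hp one_mem A.m_mem
        have : r + p - r*p = s := by linear_combination hrp
        rw [this] at h
        exact h.symm
      have e2 : A.op r 1 (A.phi1 q) = A.phi1 (r+q-r*q) :=
        A.lem1 hr' hq one_mem A.m_mem
      set s' : ℝ := r+q-r*q with hs'
      have hs'0 : 0 < s' := by nlinarith [hr'.1, hq.1, hr'.2, hq.2]
      have hs'1 : s' < 1 := by nlinarith [hr'.1, hq.1, hr'.2, hq.2]
      have hlams : 1 - s' = (1-s)*lam := by
        have h2 : 1 - s' = (1-r)*(1-q) := by rw [hs']; ring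
        rw [h2, hrr, hlam]; ring
      have hb' : 1-p ≤ (1-s')*lam^n := by
        rw [hlams]
        calc 1-p ≤ (1-s)*lam^(n+1) := hb
        _ = (1-s)*lam*lam^n := by ring
      have h3 := ih s' hs'0 hs'1 hb'
      rw [e1, ← hc, ← heq, e2, h3]
  -- Step E
  have hE : ∀ s ∈ Set.Ioo (0:ℝ) 1, A.phi1 s = m := by
    intro s hs
    obtain ⟨n, hn⟩ := pow_unbounded_of_one_lt ((1-p)/(1-s)) hlam1
    apply hD n s hs.1 hs.2
    rw [div_lt_iff₀ (by linarith [hs.2])] at hn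
    nlinarith
  -- Step F
  have h1 : (1:ℝ) ≤ Filter.liminf (fun r => A.op r 1 m) (𝓝[<] (1:ℝ)) :=
    hLC m A.m_mem 1 one_mem A.m_le_one
  have hev : ∀ᶠ r in 𝓝[<] (1:ℝ), A.op r 1 m = m := by
    filter_upwards [Ioo_mem_nhdsLT_of_mem (⟨zero_lt_one, le_refl 1⟩ : (1:ℝ) ∈ Set.Ioc 0 1)]
      with r hr
    exact hE r hr
  rw [Filter.liminf_congr hev, Filter.liminf_const] at h1
  linarith

lemma phi1_strictMono (hMO : A.MO) (hLC : A.LC) (hmax : sSup A.E < 1) :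
    StrictMonoOn A.phi1 (Set.Icc (0:ℝ) 1) := by
  intro a ha b hb hab
  rcases eq_or_lt_of_le (A.phi1_mono hMO ha hb (le_of_lt hab)) with heq|h
  · exfalso
    set q' : ℝ := a + (b-a)/3 with hq'
    set p' : ℝ := a + 2*(b-a)/3 with hp'
    have hq'' : q' ∈ Set.Ioo (0:ℝ) 1 := by
      constructor
      · have := ha.1; rw [hq']; linarith
      · have := hb.2; rw [hq']; linarith
    have hp'' : p' ∈ Set.Ioo (0:ℝ) 1 := by
      constructor
      · have := ha.1; rw [hp']; linarith
      · have := hb.2; rw [hp']; linarith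
    have hqp' : q' < p' := by rw [hq', hp']; linarith
    have haq : a ≤ q' := by rw [hq']; linarith
    have hpb : p' ≤ b := by rw [hp']; linarith
    have h1 : A.phi1 q' ≤ A.phi1 p' :=
      A.phi1_mono hMO (Set.mem_Icc_of_Ioo hq'') (Set.mem_Icc_of_Ioo hp'') (le_of_lt hqp')
    have h2 : A.phi1 a ≤ A.phi1 q' := A.phi1_mono hMO ha (Set.mem_Icc_of_Ioo hq'') haq
    have h3 : A.phi1 p' ≤ A.phi1 b := A.phi1_mono hMO (Set.mem_Icc_of_Ioo hp'') hb hpb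
    exact A.phi1_injAux hMO hLC hmax hq'' hp'' hqp' (by linarith)
  · exact h

lemma phi1_inf_le_m (hMO : A.MO) (hUC : A.UC) (hmax : sSup A.E < 1) :
    sInf (A.phi1 '' Set.Ioc (0:ℝ) 1) ≤ sSup A.E := by
  set m := sSup A.E with hm
  set d := sInf (A.phi1 '' Set.Ioc (0:ℝ) 1) with hd
  have hne : (A.phi1 '' Set.Ioc (0:ℝ) 1).Nonempty :=
    ⟨A.phi1 1, 1, ⟨zero_lt_one, le_refl 1⟩, rfl⟩
  have hbdd : BddBelow (A.phi1 '' Set.Ioc (0:ℝ) 1) := by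
    refine ⟨0, ?_⟩
    rintro z ⟨t, ht, rfl⟩
    exact (A.phi1_mem01 ⟨le_of_lt ht.1, ht.2⟩).1
  have hdle : ∀ t ∈ Set.Ioc (0:ℝ) 1, d ≤ A.phi1 t := fun t ht =>
    csInf_le hbdd ⟨t, ht, rfl⟩
  have hmd : m ≤ d := by
    apply le_csInf hne
    rintro z ⟨t, ht, rfl⟩
    exact A.phi1_ge_m hMO ⟨le_of_lt ht.1, ht.2⟩
  have hd1 : d ≤ 1 := by
    have := hdle 1 ⟨zero_lt_one, le_refl 1⟩
    rw [A.phi1_one] at this; exact this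
  by_cases hdone : d = 1
  · exfalso
    have hall : ∀ t ∈ Set.Ioc (0:ℝ) 1, A.phi1 t = 1 := by
      intro t ht
      have h1 := hdle t ht
      have h2 := (A.phi1_mem01 ⟨le_of_lt ht.1, ht.2⟩).2
      rw [hdone] at h1; linarith
    have he : A.Eats 1 m := by
      intro t ht
      rcases eq_or_lt_of_le ht.2 with h|h
      · rw [h]; exact A.proj1 1 one_mem m A.m_mem
      · exact hall t ht
    have h1E : (1:ℝ) ∈ A.E := A.eats_trans one_mem he (A.m_mem_E hMO)
    have := le_csSup A.E_bddAbove h1E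
    linarith
  have hdlt : d < 1 := lt_of_le_of_ne hd1 hdone
  have hd0 : 0 ≤ d := le_trans A.m_nonneg hmd
  have hdIcc : d ∈ Set.Icc (0:ℝ) 1 := ⟨hd0, hd1⟩
  have heats : A.Eats d m := by
    intro t ht
    rcases eq_or_lt_of_le ht.2 with h|h
    · rw [h]; exact A.proj1 d hdIcc m A.m_mem
    have ht' : t ∈ Set.Ioo (0:ℝ) 1 := ⟨ht.1, h⟩
    have le1 : A.op t d m ≤ d := by
      calc A.op t d m ≤ A.op t d d := A.mono2 hMO hdIcc A.m_mem hdIcc ht' hmd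
      _ = d := A.idem t ht' d hdIcc
    have ge1 : d ≤ A.op t d m := by
      have hUC' := hUC d ⟨hd0, hdlt⟩ m ⟨A.m_nonneg, hmax⟩ t ht'
      refine le_trans (Filter.le_limsup_of_frequently_le ?_ ?_) hUC'
      · apply Filter.Eventually.frequently
        have hδ : (0:ℝ) < min (1-d) (1-m) := by
          apply lt_min <;> linarith
        filter_upwards [Ioo_mem_nhdsGT hδ] with ε hε
        have hεd : d + ε ≤ 1 := by have := hε.2; have := min_le_left (1-d) (1-m); linarith
        have hεm : m + ε ≤ 1 := by have := hε.2; have := min_le_right (1-d) (1-m); linarith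
        obtain ⟨z, ⟨t', ht'', rfl⟩, hz⟩ := exists_lt_of_csInf_lt hne
          (show d < d + ε by linarith [hε.1])
        have htt : t'*t ∈ Set.Ioc (0:ℝ) 1 :=
          ⟨mul_pos ht''.1 ht.1, mul_le_one₀ ht''.2 (le_of_lt ht.1) ht.2⟩
        calc d ≤ A.phi1 (t'*t) := hdle (t'*t) htt
        _ = A.op t (A.phi1 t') m := A.phi1_dual ht'' ht'
        _ ≤ A.op t (d+ε) m := hMO _ (A.phi1_mem01 ⟨le_of_lt ht''.1, ht''.2⟩) (d+ε)
            ⟨by linarith [hε.1], hεd⟩ m A.m_mem t ht' (le_of_lt hz)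
        _ ≤ A.op t (d+ε) (m+ε) := A.mono2 hMO ⟨by linarith [hε.1], hεd⟩ A.m_mem
            ⟨by linarith [hε.1, A.m_nonneg], hεm⟩ ht' (by linarith [hε.1])
      · refine ⟨1, Filter.eventually_map.2 ?_⟩
        have hδ : (0:ℝ) < min (1-d) (1-m) := by
          apply lt_min <;> linarith
        filter_upwards [Ioo_mem_nhdsGT hδ] with ε hε
        have hεd : d + ε ≤ 1 := by have := hε.2; have := min_le_left (1-d) (1-m); linarith
        have hεm : m + ε ≤ 1 := by have := hε.2; have := min_le_right (1-d) (1-m); linarith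
        exact (A.mem t (Set.mem_Icc_of_Ioo ht') (d+ε) ⟨by linarith [hε.1], hεd⟩
          (m+ε) ⟨by linarith [hε.1, A.m_nonneg], hεm⟩).2
    linarith
  have hdE : d ∈ A.E := A.eats_trans hdIcc heats (A.m_mem_E hMO)
  exact le_csSup A.E_bddAbove hdE

lemma phi1_surj (hMO : A.MO) (hUC : A.UC) (hLC : A.LC) (hmax : sSup A.E < 1) :
    Set.SurjOn A.phi1 (Set.Icc (0:ℝ) 1) (Set.Icc (sSup A.E) 1) := by
  intro y hy
  set m := sSup A.E with hm
  rcases eq_or_lt_of_le hy.2 with h1|hy1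
  · exact ⟨1, one_mem, by rw [A.phi1_one, h1]⟩
  rcases eq_or_lt_of_le hy.1 with h0|hy0
  · exact ⟨0, zero_mem, by rw [A.phi1_zero, ← h0]⟩
  have hy01 : y ∈ Set.Icc (0:ℝ) 1 := ⟨le_trans A.m_nonneg (le_of_lt hy0), le_of_lt hy1⟩
  set S := {s ∈ Set.Icc (0:ℝ) 1 | A.phi1 s ≤ y} with hS
  have h0S : (0:ℝ) ∈ S := ⟨zero_mem, by rw [A.phi1_zero]; exact le_of_lt hy0⟩
  have hSne : S.Nonempty := ⟨0, h0S⟩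
  have hSbdd : BddAbove S := bddAbove_Icc.mono (fun s hs => hs.1)
  set q := sSup S with hq
  have hq01 : q ∈ Set.Icc (0:ℝ) 1 :=
    ⟨le_csSup hSbdd h0S, csSup_le hSne (fun s hs => hs.1.2)⟩
  have hlt : ∀ s, q < s → s ≤ 1 → y < A.phi1 s := by
    intro s hs hs1
    by_contra hcon
    push_neg at hcon
    have hsS : s ∈ S := ⟨⟨le_trans hq01.1 (le_of_lt hs), hs1⟩, hcon⟩
    exact absurd (le_csSup hSbdd hsS) (not_le.2 hs)
  have hqy : A.phi1 q ≤ y := by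
    rcases eq_or_lt_of_le hq01.1 with h|h
    · rw [← h, A.phi1_zero]; exact le_of_lt hy0
    have hlim := hLC m A.m_mem (A.phi1 q) (A.phi1_mem01 hq01) (A.phi1_ge_m hMO hq01)
    refine le_trans hlim (Filter.liminf_le_of_frequently_le ?_ ?_)
    · apply Filter.Eventually.frequently
      filter_upwards [Ioo_mem_nhdsLT_of_mem (⟨zero_lt_one, le_refl 1⟩ : (1:ℝ) ∈ Set.Ioc 0 1)]
        with r hr
      rw [← A.phi1_dual ⟨h, hq01.2⟩ hr]
      have hqr : q*r < q := by nlinarith [hr.1, hr.2, h]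
      obtain ⟨s, hsS, hs⟩ := exists_lt_of_lt_csSup hSne hqr
      have hqr01 : q*r ∈ Set.Icc (0:ℝ) 1 :=
        ⟨le_of_lt (mul_pos h hr.1), by nlinarith [hq01.2, hr.2]⟩
      exact le_trans (A.phi1_mono hMO hqr01 hsS.1 (le_of_lt hs)) hsS.2
    · refine ⟨0, Filter.eventually_map.2 ?_⟩
      filter_upwards [Ioo_mem_nhdsLT_of_mem (⟨zero_lt_one, le_refl 1⟩ : (1:ℝ) ∈ Set.Ioc 0 1)]
        with r hr
      exact (A.mem r (Set.mem_Icc_of_Ioo hr) _ (A.phi1_mem01 hq01) m A.m_mem).1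
  rcases eq_or_lt_of_le hqy with heq|hlt2
  · exact ⟨q, hq01, heq⟩
  exfalso
  have hq1 : q < 1 := by
    rcases eq_or_lt_of_le hq01.2 with h|h
    · rw [h, A.phi1_one] at hlt2; linarith
    · exact h
  have hliy := hLC m A.m_mem y hy01 (le_of_lt hy0)
  rcases eq_or_lt_of_le hq01.1 with h|h
  · -- q = 0
    have hbound : ∀ p ∈ Set.Ioo (0:ℝ) 1, A.op p y m ≤ sInf (A.phi1 '' Set.Ioc (0:ℝ) 1) := by
      intro p hp
      have hne : (A.phi1 '' Set.Ioc (0:ℝ) 1).Nonempty :=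
        ⟨A.phi1 1, 1, ⟨zero_lt_one, le_refl 1⟩, rfl⟩
      apply le_csInf hne
      rintro z ⟨t, ht, rfl⟩
      by_cases htp : t < p
      · have hs : t/p ∈ Set.Ioo (0:ℝ) 1 := ⟨div_pos ht.1 hp.1, (div_lt_one hp.1).2 htp⟩
        have hyp : y ≤ A.phi1 (t/p) := le_of_lt (hlt (t/p) (h ▸ hs.1) (le_of_lt hs.2))
        calc A.op p y m ≤ A.op p (A.phi1 (t/p)) m :=
            hMO y hy01 _ (A.phi1_mem01 (Set.mem_Icc_of_Ioo hs)) m A.m_mem p hp hyp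
        _ = A.phi1 ((t/p)*p) := (A.phi1_dual ⟨hs.1, le_of_lt hs.2⟩ hp).symm
        _ = A.phi1 t := by rw [div_mul_cancel₀ t (ne_of_gt hp.1)]
      · push_neg at htp
        have h2 : (2:ℝ)⁻¹ ∈ Set.Ioo (0:ℝ) 1 := by norm_num
        have hyp : y ≤ A.phi1 2⁻¹ := le_of_lt (hlt 2⁻¹ (h ▸ h2.1) (le_of_lt h2.2))
        calc A.op p y m ≤ A.op p (A.phi1 2⁻¹) m :=
            hMO y hy01 _ (A.phi1_mem01 (Set.mem_Icc_of_Ioo h2)) m A.m_mem p hp hyp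
        _ = A.phi1 (2⁻¹*p) := (A.phi1_dual ⟨h2.1, le_of_lt h2.2⟩ hp).symm
        _ ≤ A.phi1 t := by
            apply A.phi1_mono hMO ⟨le_of_lt (mul_pos (by norm_num) hp.1), by nlinarith [hp.2]⟩
              ⟨le_of_lt ht.1, ht.2⟩
            nlinarith [hp.1, hp.2, htp]
    have hfin : y ≤ sInf (A.phi1 '' Set.Ioc (0:ℝ) 1) := by
      refine le_trans hliy (Filter.liminf_le_of_frequently_le ?_ ?_)
      · apply Filter.Eventually.frequently
        filter_upwards [Ioo_mem_nhdsLT_of_mem (⟨zero_lt_one, le_refl 1⟩ : (1:ℝ) ∈ Set.Ioc 0 1)]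
          with r hr
        exact hbound r hr
      · refine ⟨0, Filter.eventually_map.2 ?_⟩
        filter_upwards [Ioo_mem_nhdsLT_of_mem (⟨zero_lt_one, le_refl 1⟩ : (1:ℝ) ∈ Set.Ioc 0 1)]
          with r hr
        exact (A.mem r (Set.mem_Icc_of_Ioo hr) y hy01 m A.m_mem).1
    have := A.phi1_inf_le_m hMO hUC hmax
    linarith
  · -- q > 0
    have hbound : ∀ p ∈ Set.Ioo (0:ℝ) 1, A.op p y m ≤ A.phi1 q := by
      intro p hp
      set q2 : ℝ := min ((q/p + q)/2) ((q+1)/2) with hq2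
      have hqp2 : q < q/p := by
        rw [lt_div_iff₀ hp.1]; nlinarith [hp.2]
      have hq2a : q < q2 := lt_min (by linarith) (by linarith)
      have hq2b : q2 < 1 := lt_of_le_of_lt (min_le_right _ _) (by linarith)
      have hq2pos : 0 < q2 := lt_trans h hq2a
      have hq2p : q2*p < q := by
        have h3 : q2 < q/p := lt_of_le_of_lt (min_le_left _ _) (by linarith)
        calc q2*p < (q/p)*p := mul_lt_mul_of_pos_right h3 hp.1
        _ = q := div_mul_cancel₀ q (ne_of_gt hp.1)
      have hyq2 : y ≤ A.phi1 q2 := le_of_lt (hlt q2 hq2a (le_of_lt hq2b))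
      calc A.op p y m ≤ A.op p (A.phi1 q2) m :=
          hMO y hy01 _ (A.phi1_mem01 ⟨le_of_lt hq2pos, le_of_lt hq2b⟩) m A.m_mem p hp hyq2
      _ = A.phi1 (q2*p) := (A.phi1_dual ⟨hq2pos, le_of_lt hq2b⟩ hp).symm
      _ ≤ A.phi1 q := A.phi1_mono hMO
          ⟨le_of_lt (mul_pos hq2pos hp.1), le_trans (le_of_lt hq2p) hq01.2⟩ hq01
          (le_of_lt hq2p)
    have hfin : y ≤ A.phi1 q := by
      refine le_trans hliy (Filter.liminf_le_of_frequently_le ?_ ?_)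
      · apply Filter.Eventually.frequently
        filter_upwards [Ioo_mem_nhdsLT_of_mem (⟨zero_lt_one, le_refl 1⟩ : (1:ℝ) ∈ Set.Ioc 0 1)]
          with r hr
        exact hbound r hr
      · refine ⟨0, Filter.eventually_map.2 ?_⟩
        filter_upwards [Ioo_mem_nhdsLT_of_mem (⟨zero_lt_one, le_refl 1⟩ : (1:ℝ) ∈ Set.Ioc 0 1)]
          with r hr
        exact (A.mem r (Set.mem_Icc_of_Ioo hr) y hy01 m A.m_mem).1
    linarith

end UCA

/-- Theorem 3.7(i): let `⟨[0,1], ⊕_p⟩` be a convex algebra satisfying (MO), (UC), (LC)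
with `max E^⊕ < 1` (the maximum of the closed nonempty set `E^⊕` is its supremum).
Then `[max E^⊕, 1]` is closed under the operations `⊕_p`, and there are exactly two
isomorphisms of `⟨[0,1], +_p⟩` onto `⟨[max E^⊕, 1], ⊕_p⟩`, one strictly increasing
and one strictly decreasing. -/
theorem stmt_15 (A : UCA) (hMO : A.MO) (hUC : A.UC) (hLC : A.LC)
    (hmax : sSup A.E < 1) :
    (∀ p ∈ Set.Ioo (0:ℝ) 1, ∀ x ∈ Set.Icc (sSup A.E) 1, ∀ y ∈ Set.Icc (sSup A.E) 1,
        A.op p x y ∈ Set.Icc (sSup A.E) 1) ∧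
    ∃ Φ₁ Φ₂ : ℝ → ℝ,
      A.IsStdIso (sSup A.E) Φ₁ ∧ A.IsStdIso (sSup A.E) Φ₂ ∧
      StrictMonoOn Φ₁ (Set.Icc (0:ℝ) 1) ∧ StrictAntiOn Φ₂ (Set.Icc (0:ℝ) 1) ∧
      ∀ Φ : ℝ → ℝ, A.IsStdIso (sSup A.E) Φ →
        (Set.EqOn Φ Φ₁ (Set.Icc (0:ℝ) 1) ∨ Set.EqOn Φ Φ₂ (Set.Icc (0:ℝ) 1)) := by
  constructor
  · exact fun p hp x hx y hy => A.closure hMO hp hx hy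
  have hsm := A.phi1_strictMono hMO hLC hmax
  have hbij1 : Set.BijOn A.phi1 (Set.Icc (0:ℝ) 1) (Set.Icc (sSup A.E) 1) := by
    refine ⟨fun s hs => ⟨A.phi1_ge_m hMO hs, (A.phi1_mem01 hs).2⟩, hsm.injOn,
      A.phi1_surj hMO hUC hLC hmax⟩
  have hphi2eq : ∀ s ∈ Set.Icc (0:ℝ) 1, A.op s (sSup A.E) 1 = A.phi1 (1-s) := by
    intro s hs
    rcases UCA.icc_cases hs with rfl|rfl|hs'
    · rw [A.proj0 _ A.m_mem 1 UCA.one_mem]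
      norm_num [UCA.phi1_one]
    · rw [A.proj1 _ A.m_mem 1 UCA.one_mem]
      norm_num [UCA.phi1_zero]
    · rw [A.comm s hs' _ A.m_mem 1 UCA.one_mem]
      rfl
  have hbijsig : Set.BijOn (fun s : ℝ => 1-s) (Set.Icc (0:ℝ) 1) (Set.Icc (0:ℝ) 1) := by
    refine ⟨fun s hs => ⟨by simp; exact hs.2, by simp; exact hs.1⟩,
      fun a _ b _ h => by dsimp at h; linarith,
      fun z hz => ⟨1-z, ⟨by simp; exact hz.2, by simp; exact hz.1⟩, by dsimp; ring⟩⟩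
  refine ⟨A.phi1, fun s => A.op s (sSup A.E) 1, ⟨hbij1,
    fun p hp s hs t ht => A.phi1_hom hp hs ht⟩, ⟨?_,
    fun p hp s hs t ht => (A.lem2 hp hs ht A.m_mem UCA.one_mem).symm⟩, hsm, ?_, ?_⟩
  · exact (hbij1.comp hbijsig).congr (fun s hs => (hphi2eq s hs).symm)
  · intro a ha b hb hab
    have h1a : 1-a ∈ Set.Icc (0:ℝ) 1 := ⟨by linarith [ha.2], by linarith [ha.1]⟩
    have h1b : 1-b ∈ Set.Icc (0:ℝ) 1 := ⟨by linarith [hb.2], by linarith [hb.1]⟩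
    dsimp only
    rw [hphi2eq a ha, hphi2eq b hb]
    exact hsm h1b h1a (by linarith)
  · intro Φ hΦ
    obtain ⟨hbij, hhom⟩ := hΦ
    have h0m : Φ 0 ∈ Set.Icc (sSup A.E) 1 := hbij.1 UCA.zero_mem
    have h1m : Φ 1 ∈ Set.Icc (sSup A.E) 1 := hbij.1 UCA.one_mem
    have h0m' : Φ 0 ∈ Set.Icc (0:ℝ) 1 := ⟨le_trans A.m_nonneg h0m.1, h0m.2⟩
    have h1m' : Φ 1 ∈ Set.Icc (0:ℝ) 1 := ⟨le_trans A.m_nonneg h1m.1, h1m.2⟩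
    have hrep : ∀ s ∈ Set.Ioo (0:ℝ) 1, Φ s = A.op s (Φ 1) (Φ 0) := by
      intro s hs
      have := hhom s hs 1 UCA.one_mem 0 UCA.zero_mem
      rw [mul_one, mul_zero, add_zero] at this
      exact this
    have hne01 : Φ 0 ≠ Φ 1 := by
      intro h
      have := hbij.2.1 UCA.zero_mem UCA.one_mem h
      norm_num at this
    rcases lt_or_gt_of_ne hne01 with hlt|hgt
    · -- increasing case
      left
      have hge : ∀ s ∈ Set.Icc (0:ℝ) 1, Φ 0 ≤ Φ s := by
        intro s hs
        rcases UCA.icc_cases hs with rfl|rfl|hs'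
        · exact le_refl _
        · exact le_of_lt hlt
        · rw [hrep s hs']
          calc Φ 0 = A.op s (Φ 0) (Φ 0) := (A.idem s hs' _ h0m').symm
          _ ≤ A.op s (Φ 1) (Φ 0) := hMO _ h0m' _ h1m' _ h0m' s hs' (le_of_lt hlt)
      have hle : ∀ s ∈ Set.Icc (0:ℝ) 1, Φ s ≤ Φ 1 := by
        intro s hs
        rcases UCA.icc_cases hs with rfl|rfl|hs'
        · exact le_of_lt hlt
        · exact le_refl _
        · rw [hrep s hs']
          calc A.op s (Φ 1) (Φ 0) ≤ A.op s (Φ 1) (Φ 1) :=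
              A.mono2 hMO h1m' h0m' h1m' hs' (le_of_lt hlt)
          _ = Φ 1 := A.idem s hs' _ h1m'
      obtain ⟨s0, hs0, hs0e⟩ := hbij.2.2 (⟨le_refl _, A.m_le_one⟩ : sSup A.E ∈ Set.Icc (sSup A.E) 1)
      obtain ⟨s1, hs1, hs1e⟩ := hbij.2.2 (⟨A.m_le_one, le_refl 1⟩ : (1:ℝ) ∈ Set.Icc (sSup A.E) 1)
      have hΦ0 : Φ 0 = sSup A.E := le_antisymm (hs0e ▸ hge s0 hs0) h0m.1
      have hΦ1 : Φ 1 = 1 := le_antisymm h1m.2 (hs1e ▸ hle s1 hs1)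
      intro s hs
      rcases UCA.icc_cases hs with rfl|rfl|hs'
      · rw [hΦ0, A.phi1_zero]
      · rw [hΦ1, A.phi1_one]
      · rw [hrep s hs', hΦ0, hΦ1]; rfl
    · -- decreasing case
      right
      have hge : ∀ s ∈ Set.Icc (0:ℝ) 1, Φ 1 ≤ Φ s := by
        intro s hs
        rcases UCA.icc_cases hs with rfl|rfl|hs'
        · exact le_of_lt hgt
        · exact le_refl _
        · rw [hrep s hs']
          calc Φ 1 = A.op s (Φ 1) (Φ 1) := (A.idem s hs' _ h1m').symm
          _ ≤ A.op s (Φ 1) (Φ 0) := A.mono2 hMO h1m' h1m' h0m' hs' (le_of_lt hgt)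
      have hle : ∀ s ∈ Set.Icc (0:ℝ) 1, Φ s ≤ Φ 0 := by
        intro s hs
        rcases UCA.icc_cases hs with rfl|rfl|hs'
        · exact le_refl _
        · exact le_of_lt hgt
        · rw [hrep s hs']
          calc A.op s (Φ 1) (Φ 0) ≤ A.op s (Φ 0) (Φ 0) :=
              hMO _ h1m' _ h0m' _ h0m' s hs' (le_of_lt hgt)
          _ = Φ 0 := A.idem s hs' _ h0m'
      obtain ⟨s0, hs0, hs0e⟩ := hbij.2.2 (⟨le_refl _, A.m_le_one⟩ : sSup A.E ∈ Set.Icc (sSup A.E) 1)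
      obtain ⟨s1, hs1, hs1e⟩ := hbij.2.2 (⟨A.m_le_one, le_refl 1⟩ : (1:ℝ) ∈ Set.Icc (sSup A.E) 1)
      have hΦ1 : Φ 1 = sSup A.E := le_antisymm (hs0e ▸ hge s0 hs0) h1m.1
      have hΦ0 : Φ 0 = 1 := le_antisymm h0m.2 (hs1e ▸ hle s1 hs1)
      intro s hs
      rcases UCA.icc_cases hs with rfl|rfl|hs'
      · rw [hΦ0]
        exact (A.proj0 _ A.m_mem 1 UCA.one_mem).symm
      · rw [hΦ1]
        exact (A.proj1 _ A.m_mem 1 UCA.one_mem).symm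
      · rw [hrep s hs', hΦ0, hΦ1]
end
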